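/- arXiv:1208.5920 — 7 statements merged into one kernel-verified Lean document; each statement's English description precedes it below -/
import Mathlib

section
/- Let a > 0 and define q(m,n) = a m^2 + n^2/a for natural numbers m, n. Then there is a constant C > 0 (depending only on a) such that for every real y ≥ 1 there exist natural numbers m, n with 0 ≤ y - q(m,n) ≤ C · y^{1/4}. -/
lemma greedy_sq (x : ℝ) (hx : 0 ≤ x) :
    ∃ m : ℕ, 0 ≤ x - (m : ℝ) ^ 2 ∧ x - (m : ℝ) ^ 2 ≤ 2 * Real.sqrt x + 1 := by
  refine ⟨⌊Real.sqrt x⌋₊, ?_, ?_⟩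
  · have h1 : (⌊Real.sqrt x⌋₊ : ℝ) ≤ Real.sqrt x := Nat.floor_le (Real.sqrt_nonneg x)
    nlinarith [Real.sq_sqrt hx, Real.sqrt_nonneg x]
  · have h2 : Real.sqrt x < (⌊Real.sqrt x⌋₊ : ℝ) + 1 := Nat.lt_floor_add_one _
    have h1 : (⌊Real.sqrt x⌋₊ : ℝ) ≤ Real.sqrt x := Nat.floor_le (Real.sqrt_nonneg x)
    nlinarith [Real.sq_sqrt hx]

lemma sqrt_add_le' (u v : ℝ) (hu : 0 ≤ u) (hv : 0 ≤ v) :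
    Real.sqrt (u + v) ≤ Real.sqrt u + Real.sqrt v := by
  have h1 := Real.sq_sqrt hu
  have h2 := Real.sq_sqrt hv
  have h3 := Real.sqrt_nonneg u
  have h4 := Real.sqrt_nonneg v
  rw [show u + v = (Real.sqrt u)^2 + (Real.sqrt v)^2 by rw [h1, h2]]
  have : Real.sqrt ((Real.sqrt u)^2 + (Real.sqrt v)^2) ≤
      Real.sqrt ((Real.sqrt u + Real.sqrt v)^2) := by
    apply Real.sqrt_le_sqrt; nlinarith
  calc _ ≤ _ := this
    _ = _ := Real.sqrt_sq (by linarith)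

theorem stmt_3 (a : ℝ) (ha : 0 < a) :
    ∃ C : ℝ, 0 < C ∧ ∀ y : ℝ, 1 ≤ y → ∃ m n : ℕ,
      0 ≤ y - (a * m ^ 2 + n ^ 2 / a) ∧
      y - (a * m ^ 2 + n ^ 2 / a) ≤ C * y ^ ((1 : ℝ) / 4) := by
  have hsa : 0 < Real.sqrt a := Real.sqrt_pos.mpr ha
  set K : ℝ := Real.sqrt (2 * a * Real.sqrt a) with hK
  have hK0 : 0 ≤ K := Real.sqrt_nonneg _
  refine ⟨(2 * K + 2 * a + 1) / a, by positivity, ?_⟩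
  intro y hy
  have hy0 : (0:ℝ) ≤ y := by linarith
  obtain ⟨m, hm1, hm2⟩ := greedy_sq (y / a) (by positivity)
  set r1 : ℝ := y - a * (m : ℝ) ^ 2 with hr1def
  have hr1eq : r1 = a * (y / a - (m:ℝ)^2) := by field_simp [hr1def]; exact hr1def
  have hr1 : 0 ≤ r1 := by rw [hr1eq]; exact mul_nonneg ha.le hm1
  have hsqdiv : Real.sqrt (y / a) = Real.sqrt y / Real.sqrt a := Real.sqrt_div hy0 a
  have hmulself : Real.sqrt a * Real.sqrt a = a := Real.mul_self_sqrt ha.le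
  have h3 : a * Real.sqrt (y/a) = Real.sqrt a * Real.sqrt y := by
    rw [hsqdiv]; field_simp; linear_combination (-1) * Real.sq_sqrt ha.le
  have hr1ub : r1 ≤ 2 * Real.sqrt a * Real.sqrt y + a := by
    have h2 : a * (y / a - (m:ℝ)^2) ≤ a * (2 * Real.sqrt (y/a) + 1) :=
      mul_le_mul_of_nonneg_left hm2 ha.le
    rw [hr1eq]; nlinarith [h2, h3]
  obtain ⟨n, hn1, hn2⟩ := greedy_sq (a * r1) (by positivity)
  refine ⟨m, n, ?_, ?_⟩
  · have key : y - (a * (m:ℝ) ^ 2 + (n:ℝ) ^ 2 / a) = (a * r1 - (n:ℝ)^2)/a := by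
      field_simp [hr1def]; ring
    rw [key]; exact div_nonneg hn1 ha.le
  · have key : y - (a * (m:ℝ) ^ 2 + (n:ℝ) ^ 2 / a) = (a * r1 - (n:ℝ)^2)/a := by
      field_simp [hr1def]; ring
    set s : ℝ := y ^ ((1:ℝ)/4) with hs
    have hss : Real.sqrt (Real.sqrt y) = s := by
      rw [hs, Real.sqrt_eq_rpow, Real.sqrt_eq_rpow, ← Real.rpow_mul hy0]
      norm_num
    have hs1 : (1:ℝ) ≤ s := by
      rw [hs]
      calc (1:ℝ) = 1 ^ ((1:ℝ)/4) := by rw [Real.one_rpow]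
        _ ≤ y ^ ((1:ℝ)/4) := Real.rpow_le_rpow (by norm_num) hy (by norm_num)
    have har1 : a * r1 ≤ 2 * a * Real.sqrt a * Real.sqrt y + a^2 := by nlinarith [hr1ub]
    have hsb : Real.sqrt (a * r1) ≤ K * s + a := by
      calc Real.sqrt (a * r1) ≤ Real.sqrt (2 * a * Real.sqrt a * Real.sqrt y + a^2) :=
            Real.sqrt_le_sqrt har1
        _ ≤ Real.sqrt (2 * a * Real.sqrt a * Real.sqrt y) + Real.sqrt (a^2) :=
            sqrt_add_le' _ _ (by positivity) (by positivity)
        _ = K * s + a := by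
            rw [Real.sqrt_mul (by positivity) (Real.sqrt y), hss, Real.sqrt_sq ha.le]
    rw [key]
    have step1 : (a * r1 - (n:ℝ)^2)/a ≤ (2 * Real.sqrt (a * r1) + 1)/a := by gcongr
    refine step1.trans ?_
    rw [div_le_iff₀ ha]
    have : (2 * K + 2 * a + 1) / a * s * a = (2 * K + 2 * a + 1) * s := by
      field_simp
    rw [this]
    nlinarith [hsb, hs1, hK0]
end

section
/- Let (λ_j) and (d_j) be sequences of nonnegative reals with λ_j → ∞, and suppose there exist constants C, C' > 0 with d_j ≤ C·λ_j^{1/4} for all j ≥ 1 and #{j : λ_j ≤ x} ≤ C'·x for all x ≥ 1. Then as β → 0+, the sum ∑_j d_j e^{-β λ_j} (1 - (1 - e^{-β d_j})/(β d_j)) is O(β^{-1/2}). -/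
open Filter MeasureTheory Topology Asymptotics
open scoped ENNReal

lemma exp_quad_bound (t : ℝ) (ht : 0 ≤ t) : Real.exp (-t) ≤ 1 - t + t ^ 2 / 2 := by
  have hd : ∀ x : ℝ, HasDerivAt (fun t : ℝ => 1 - t + t ^ 2 / 2 - Real.exp (-t))
      (-1 + x + Real.exp (-x)) x := by
    intro x
    have h1 : HasDerivAt (fun t : ℝ => Real.exp (-t)) (-Real.exp (-x)) x := by
      exact ((Real.hasDerivAt_exp (-x)).comp x (hasDerivAt_neg x)).congr_deriv (by simp)
    have h2 : HasDerivAt (fun t : ℝ => 1 - t + t ^ 2 / 2) (-1 + x) x := by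
      have := ((hasDerivAt_const x (1:ℝ)).sub (hasDerivAt_id x)).add
        ((hasDerivAt_pow 2 x).div_const 2)
      refine this.congr_deriv ?_
      norm_num
    exact (h2.sub h1).congr_deriv (by ring)
  have hmono : Monotone (fun t : ℝ => 1 - t + t ^ 2 / 2 - Real.exp (-t)) := by
    apply monotone_of_deriv_nonneg (fun x => (hd x).differentiableAt)
    intro x
    rw [(hd x).deriv]
    nlinarith [Real.add_one_le_exp (-x)]
  have h0 := hmono ht
  norm_num [Real.exp_zero] at h0
  linarith

lemma one_sub_exp_bound (b : ℝ) (hb0 : 0 < b) (hb1 : b ≤ 1) : b / 2 ≤ 1 - Real.exp (-b) := by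
  nlinarith [exp_quad_bound b hb0.le]

lemma factor_nonneg (t : ℝ) (ht : 0 ≤ t) : 0 ≤ 1 - (1 - Real.exp (-t)) / t := by
  rcases eq_or_lt_of_le ht with h | h
  · rw [← h]; simp
  · have h1 : 1 - Real.exp (-t) ≤ t := by nlinarith [Real.add_one_le_exp (-t)]
    have := div_le_one_of_le₀ h1 h.le
    linarith

lemma factor_le (t : ℝ) (ht : 0 < t) : 1 - (1 - Real.exp (-t)) / t ≤ t / 2 := by
  have h2 : Real.exp (-t) ≤ 1 - t + t ^ 2 / 2 := exp_quad_bound t ht.le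
  have key : (t - t ^ 2 / 2) / t ≤ (1 - Real.exp (-t)) / t := by
    have hnum : t - t ^ 2 / 2 ≤ 1 - Real.exp (-t) := by linarith
    exact div_le_div_of_nonneg_right hnum ht.le
  have heq : (t - t ^ 2 / 2) / t = 1 - t / 2 := by field_simp
  rw [heq] at key
  linarith

lemma factor_le_one (t : ℝ) (ht : 0 ≤ t) : 1 - (1 - Real.exp (-t)) / t ≤ 1 := by
  rcases eq_or_lt_of_le ht with h | h
  · rw [← h]; simp
  · have h1 : 0 ≤ 1 - Real.exp (-t) := by
      have := Real.exp_le_exp.mpr (show -t ≤ 0 by linarith)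
      simp only [Real.exp_zero] at this; linarith
    have := div_nonneg h1 ht
    linarith

lemma finite_le (l : ℕ → ℝ) (hlim : Tendsto l atTop atTop) (x : ℝ) :
    {j : ℕ | l j ≤ x}.Finite := by
  obtain ⟨N, hN⟩ := eventually_atTop.mp (hlim.eventually_gt_atTop x)
  apply Set.Finite.subset (Set.finite_Iio N)
  intro j hj
  simp only [Set.mem_setOf_eq] at hj
  by_contra h'
  exact absurd (hN j (not_lt.mp fun h => h' h)) (not_lt.mpr hj)

lemma geom_tail (q : ℝ≥0∞) (m : ℕ) :
    ∑' k : ℕ, (if m ≤ k then q ^ k else 0) = q ^ m * (1 - q)⁻¹ := by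
  have hinj : Function.Injective (fun k : ℕ => m + k) := add_right_injective m
  have hsupp : Function.support (fun k : ℕ => if m ≤ k then q ^ k else 0) ⊆
      Set.range (fun k : ℕ => m + k) := by
    intro x hx
    rw [Function.mem_support] at hx
    by_cases h : m ≤ x
    · exact ⟨x - m, show m + (x - m) = x by omega⟩
    · simp [h] at hx
  have := hinj.tsum_eq (f := fun k : ℕ => if m ≤ k then q ^ k else 0) hsupp
  rw [← this]
  have : ∀ c : ℕ, (if m ≤ m + c then q ^ (m + c) else 0) = q ^ m * q ^ c := by
    intro c; rw [if_pos (Nat.le_add_right m c), pow_add]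
  rw [tsum_congr this, ENNReal.tsum_mul_left, ENNReal.tsum_geometric]

lemma sum_exp_bound (l : ℕ → ℝ) (hl : ∀ j, 0 ≤ l j) (hlim : Tendsto l atTop atTop)
    (C' : ℝ) (hC' : 0 < C')
    (hcount : ∀ x : ℝ, 1 ≤ x → ∀ s : Finset ℕ, (∀ j ∈ s, l j ≤ x) → (s.card : ℝ) ≤ C' * x)
    (b : ℝ) (hb0 : 0 < b) (hb1 : b ≤ 1) :
    Summable (fun j => Real.exp (-b * l j)) ∧
      ∑' j, Real.exp (-b * l j) ≤ 2 * C' / b := by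
  set r : ℝ := Real.exp (-b) with hr_def
  have hr0 : 0 < r := Real.exp_pos _
  have hr1 : r < 1 := Real.exp_lt_one_iff.mpr (by linarith)
  have hsub : b / 2 ≤ 1 - r := one_sub_exp_bound b hb0 hb1
  have hsub0 : 0 < 1 - r := by linarith
  set q : ℝ≥0∞ := ENNReal.ofReal r with hq_def
  have hq1 : q < 1 := by
    rw [hq_def, ← ENNReal.ofReal_one]
    exact ENNReal.ofReal_lt_ofReal_iff one_pos |>.mpr hr1
  -- pointwise bound
  have hpt : ∀ j, ENNReal.ofReal (Real.exp (-b * l j)) ≤ q ^ ⌊l j⌋₊ := by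
    intro j
    have h1 : Real.exp (-b * l j) ≤ r ^ ⌊l j⌋₊ := by
      rw [hr_def, ← Real.exp_nat_mul]
      apply Real.exp_le_exp.mpr
      have := Nat.floor_le (hl j)
      nlinarith [this, hb0]
    calc ENNReal.ofReal (Real.exp (-b * l j)) ≤ ENNReal.ofReal (r ^ ⌊l j⌋₊) :=
          ENNReal.ofReal_le_ofReal h1
      _ = q ^ ⌊l j⌋₊ := ENNReal.ofReal_pow hr0.le _
  -- counting bound
  have hcard : ∀ k : ℕ, (∑' j : ℕ, (if ⌊l j⌋₊ ≤ k then (1:ℝ≥0∞) else 0)) ≤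
      ENNReal.ofReal (C' * (k + 1)) := by
    intro k
    have hfin : {j : ℕ | l j ≤ (k : ℝ) + 1}.Finite := finite_le l hlim ((k : ℝ) + 1)
    have hle : ∀ j, (if ⌊l j⌋₊ ≤ k then (1:ℝ≥0∞) else 0) ≤
        (if l j ≤ (k : ℝ) + 1 then (1:ℝ≥0∞) else 0) := by
      intro j
      by_cases h : ⌊l j⌋₊ ≤ k
      · have : l j < ⌊l j⌋₊ + 1 := Nat.lt_floor_add_one (l j)
        have h2 : l j ≤ (k : ℝ) + 1 := by
          have : l j < (k : ℝ) + 1 := by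
            calc l j < ⌊l j⌋₊ + 1 := this
              _ ≤ (k : ℝ) + 1 := by exact_mod_cast by gcongr
          linarith
        simp [h, h2]
      · simp [h]
    refine le_trans (ENNReal.tsum_le_tsum hle) ?_
    have heq : ∑' j : ℕ, (if l j ≤ (k : ℝ) + 1 then (1:ℝ≥0∞) else 0) =
        (hfin.toFinset.card : ℝ≥0∞) := by
      rw [tsum_eq_sum (s := hfin.toFinset) (fun j hj => by
        simp only [Set.Finite.mem_toFinset, Set.mem_setOf_eq] at hj
        exact if_neg hj)]
      rw [Finset.sum_congr rfl (fun j hj => by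
        simp only [Set.Finite.mem_toFinset, Set.mem_setOf_eq] at hj
        exact if_pos hj)]
      simp
    rw [heq]
    have hcard' : (hfin.toFinset.card : ℝ) ≤ C' * ((k : ℝ) + 1) := by
      apply hcount ((k : ℝ) + 1) (by linarith [show (0:ℝ) ≤ (k:ℝ) from Nat.cast_nonneg k]) hfin.toFinset
      intro j hj
      simpa only [Set.Finite.mem_toFinset, Set.mem_setOf_eq] using hj
    calc (hfin.toFinset.card : ℝ≥0∞) = ENNReal.ofReal (hfin.toFinset.card : ℝ) := by
          rw [ENNReal.ofReal_natCast]
      _ ≤ ENNReal.ofReal (C' * (k + 1)) := ENNReal.ofReal_le_ofReal (by exact_mod_cast hcard')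
  -- geometric series facts in ℝ
  have hnorm : ‖r‖ < 1 := by rwa [Real.norm_eq_abs, abs_of_pos hr0]
  have hs1 : Summable (fun k : ℕ => (k : ℝ) * r ^ k) := by
    have := summable_pow_mul_geometric_of_norm_lt_one 1 hnorm
    simpa using this
  have hs2 : Summable (fun k : ℕ => r ^ k) := summable_geometric_of_lt_one hr0.le hr1
  have hsumm : Summable (fun k : ℕ => C' * ((k : ℝ) + 1) * r ^ k) :=
    ((hs1.add hs2).mul_left C').congr (fun k => by ring)
  have hnn : ∀ k : ℕ, 0 ≤ C' * ((k : ℝ) + 1) * r ^ k := by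
    intro k; positivity
  have hT : ∑' k : ℕ, C' * ((k : ℝ) + 1) * r ^ k = C' / (1 - r) ^ 2 := by
    have h1 : ∑' k : ℕ, (k : ℝ) * r ^ k = r / (1 - r) ^ 2 :=
      tsum_coe_mul_geometric_of_norm_lt_one hnorm
    have h2 : ∑' k : ℕ, r ^ k = (1 - r)⁻¹ := tsum_geometric_of_lt_one hr0.le hr1
    calc ∑' k : ℕ, C' * ((k : ℝ) + 1) * r ^ k
        = ∑' k : ℕ, C' * ((k : ℝ) * r ^ k + r ^ k) := tsum_congr (fun k => by ring)
      _ = C' * ∑' k : ℕ, ((k : ℝ) * r ^ k + r ^ k) := tsum_mul_left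
      _ = C' * (r / (1 - r) ^ 2 + (1 - r)⁻¹) := by rw [Summable.tsum_add hs1 hs2, h1, h2]
      _ = C' / (1 - r) ^ 2 := by field_simp; ring
  have h1q : (1 : ℝ≥0∞) - q ≠ 0 := by
    rw [Ne, tsub_eq_zero_iff_le]
    exact not_le.mpr hq1
  have h2q : (1 : ℝ≥0∞) - q ≠ ⊤ := (tsub_le_self.trans_lt ENNReal.one_lt_top).ne
  have key : ∑' j, ENNReal.ofReal (Real.exp (-b * l j)) ≤ ENNReal.ofReal (2 * C' / b) := by
    calc ∑' j, ENNReal.ofReal (Real.exp (-b * l j))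
        ≤ ∑' j, q ^ ⌊l j⌋₊ := ENNReal.tsum_le_tsum hpt
      _ = ∑' j, (1 - q) * ∑' k : ℕ, (if ⌊l j⌋₊ ≤ k then q ^ k else 0) := by
          apply tsum_congr; intro j
          rw [geom_tail q ⌊l j⌋₊, mul_comm (1 - q), mul_assoc,
            ENNReal.inv_mul_cancel h1q h2q, mul_one]
      _ = (1 - q) * ∑' j, ∑' k : ℕ, (if ⌊l j⌋₊ ≤ k then q ^ k else 0) :=
          ENNReal.tsum_mul_left
      _ = (1 - q) * ∑' k : ℕ, ∑' j, (if ⌊l j⌋₊ ≤ k then q ^ k else 0) := by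
          rw [ENNReal.tsum_comm]
      _ ≤ (1 - q) * ∑' k : ℕ, ENNReal.ofReal (C' * ((k : ℝ) + 1)) * q ^ k := by
          gcongr with k
          calc ∑' j, (if ⌊l j⌋₊ ≤ k then q ^ k else 0)
              = ∑' j, q ^ k * (if ⌊l j⌋₊ ≤ k then (1:ℝ≥0∞) else 0) :=
                tsum_congr (fun j => by split <;> simp)
            _ = q ^ k * ∑' j, (if ⌊l j⌋₊ ≤ k then (1:ℝ≥0∞) else 0) := ENNReal.tsum_mul_left
            _ ≤ q ^ k * ENNReal.ofReal (C' * ((k : ℝ) + 1)) := mul_le_mul_right (hcard k) _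
            _ = ENNReal.ofReal (C' * ((k : ℝ) + 1)) * q ^ k := mul_comm _ _
      _ = (1 - q) * ENNReal.ofReal (∑' k : ℕ, C' * ((k : ℝ) + 1) * r ^ k) := by
          congr 1
          rw [ENNReal.ofReal_tsum_of_nonneg hnn hsumm]
          apply tsum_congr; intro k
          rw [show q ^ k = ENNReal.ofReal (r ^ k) from (ENNReal.ofReal_pow hr0.le k).symm,
            ← ENNReal.ofReal_mul (by positivity : (0:ℝ) ≤ C' * ((k : ℝ) + 1))]
      _ ≤ ENNReal.ofReal (2 * C' / b) := by
          rw [hT]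
          have hq_eq : (1 : ℝ≥0∞) - q = ENNReal.ofReal (1 - r) := by
            rw [ENNReal.ofReal_sub _ hr0.le, ENNReal.ofReal_one]
          rw [hq_eq, ← ENNReal.ofReal_mul (by linarith)]
          apply ENNReal.ofReal_le_ofReal
          have heq : (1 - r) * (C' / (1 - r) ^ 2) = C' / (1 - r) := by
            field_simp
          rw [heq, div_le_div_iff₀ hsub0 hb0]
          nlinarith
  have hne : (∑' j, ENNReal.ofReal (Real.exp (-b * l j))) ≠ ⊤ :=
    (key.trans_lt ENNReal.ofReal_lt_top).ne
  have hsummable : Summable fun j => Real.exp (-b * l j) := by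
    have h := ENNReal.summable_toReal hne
    exact h.congr fun j => ENNReal.toReal_ofReal (Real.exp_nonneg _)
  refine ⟨hsummable, ?_⟩
  rw [← ENNReal.ofReal_le_ofReal_iff (by positivity)]
  rw [ENNReal.ofReal_tsum_of_nonneg (fun j => Real.exp_nonneg _) hsummable]
  exact key


theorem stmt_4 (l d : ℕ → ℝ) (hl : ∀ j, 0 ≤ l j) (hd : ∀ j, 0 ≤ d j)
    (hlim : Tendsto l atTop atTop)
    (C C' : ℝ) (hC : 0 < C) (hC' : 0 < C')
    (hgap : ∀ j : ℕ, 1 ≤ j → d j ≤ C * l j ^ ((1 : ℝ) / 4))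
    (hcount : ∀ x : ℝ, 1 ≤ x → ∀ s : Finset ℕ, (∀ j ∈ s, l j ≤ x) → (s.card : ℝ) ≤ C' * x) :
    (fun β : ℝ => ∑' j : ℕ, d j * Real.exp (-β * l j) *
        (1 - (1 - Real.exp (-β * d j)) / (β * d j)))
      =O[𝓝[>] 0] fun β : ℝ => β ^ (-(1 : ℝ) / 2) := by
  rw [Asymptotics.isBigO_iff]
  refine ⟨2 * C ^ 2 * C' + d 0, ?_⟩
  filter_upwards [Ioc_mem_nhdsGT_of_mem (Set.mem_Ico.mpr ⟨le_refl (0:ℝ), one_pos⟩)] with β hβ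
  obtain ⟨hβ0, hβ1⟩ := hβ
  simp only [neg_mul]
  set t : ℕ → ℝ := fun j => d j * Real.exp (-(β * l j)) *
    (1 - (1 - Real.exp (-(β * d j))) / (β * d j)) with ht_def
  have hE := sum_exp_bound l hl hlim C' hC' hcount (β/2) (by linarith) (by linarith)
  set E : ℕ → ℝ := fun j => Real.exp (-(β/2) * l j) with hE_def
  have hrpow_pos : 0 < β ^ (-(1:ℝ)/2) := Real.rpow_pos_of_pos hβ0 _
  set A : ℝ := C ^ 2 / 2 * β * β ^ (-(1:ℝ)/2) with hA_def
  have hA0 : 0 ≤ A := by positivity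
  set v : ℕ → ℝ := fun j => A * E j + (if j = 0 then d 0 else 0) with hv_def
  have hv_single : Summable (fun j : ℕ => if j = 0 then d 0 else 0) :=
    summable_of_ne_finset_zero (s := {0}) (fun j hj => if_neg (by simpa using hj))
  have hv_sum : Summable v := (hE.1.mul_left A).add hv_single
  have hEpos : ∀ j, 0 < E j := fun j => Real.exp_pos _
  have ht_nonneg : ∀ j, 0 ≤ t j := by
    intro j
    have h1 := factor_nonneg (β * d j) (mul_nonneg hβ0.le (hd j))
    have h2 := Real.exp_nonneg (-(β * l j))
    simp only [ht_def]
    exact mul_nonneg (mul_nonneg (hd j) h2) h1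
  have hbound : ∀ j, ‖t j‖ ≤ v j := by
    intro j
    rw [Real.norm_eq_abs, abs_of_nonneg (ht_nonneg j)]
    by_cases hj0 : j = 0
    · subst hj0
      have he1 : Real.exp (-(β * l 0)) ≤ 1 := Real.exp_le_one_iff.mpr (by nlinarith [hl 0])
      have hf1 := factor_le_one (β * d 0) (mul_nonneg hβ0.le (hd 0))
      have hf0 := factor_nonneg (β * d 0) (mul_nonneg hβ0.le (hd 0))
      have he0 := Real.exp_nonneg (-(β * l 0))
      have ht0 : t 0 ≤ d 0 := by
        simp only [ht_def]
        have q1 : d 0 * Real.exp (-(β * l 0)) * (1 - (1 - Real.exp (-(β * d 0))) / (β * d 0)) ≤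
            d 0 * Real.exp (-(β * l 0)) :=
          mul_le_of_le_one_right (mul_nonneg (hd 0) he0) hf1
        have q2 : d 0 * Real.exp (-(β * l 0)) ≤ d 0 := mul_le_of_le_one_right (hd 0) he1
        linarith
      have hAE0 : 0 ≤ A * E 0 := mul_nonneg hA0 (hEpos 0).le
      have hv0 : v 0 = A * E 0 + d 0 := by simp [hv_def]
      rw [hv0]
      linarith
    · have hj1 : 1 ≤ j := Nat.one_le_iff_ne_zero.mpr hj0
      have hAE : t j ≤ A * E j := by
        by_cases hdj : d j = 0
        · have : t j = 0 := by simp only [ht_def]; simp [hdj]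
          rw [this]
          exact mul_nonneg hA0 (hEpos j).le
        · have hdj' : 0 < d j := lt_of_le_of_ne (hd j) (Ne.symm hdj)
          have hbd : 0 < β * d j := mul_pos hβ0 hdj'
          have hfle := factor_le (β * d j) hbd
          have he0 := Real.exp_nonneg (-(β * l j))
          have step1 : t j ≤ β/2 * d j ^ 2 * Real.exp (-(β * l j)) := by
            have hde : 0 ≤ d j * Real.exp (-(β * l j)) := mul_nonneg (hd j) he0
            calc t j ≤ d j * Real.exp (-(β * l j)) * (β * d j / 2) := by
                  rw [ht_def]
                  exact mul_le_mul_of_nonneg_left hfle hde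
              _ = β/2 * d j ^ 2 * Real.exp (-(β * l j)) := by ring
          have hx : (l j ^ ((1:ℝ)/4)) ^ 2 = l j ^ ((1:ℝ)/2) := by
            rw [← Real.rpow_natCast (l j ^ ((1:ℝ)/4)) 2, ← Real.rpow_mul (hl j)]
            norm_num
          have step2 : d j ^ 2 ≤ C ^ 2 * l j ^ ((1:ℝ)/2) := by
            have h4 := hgap j hj1
            have h5 : d j ^ 2 ≤ (C * l j ^ ((1:ℝ)/4)) ^ 2 := by
              have := hd j
              nlinarith
            calc d j ^ 2 ≤ (C * l j ^ ((1:ℝ)/4)) ^ 2 := h5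
              _ = C ^ 2 * (l j ^ ((1:ℝ)/4)) ^ 2 := by ring
              _ = C ^ 2 * l j ^ ((1:ℝ)/2) := by rw [hx]
          have step3 : l j ^ ((1:ℝ)/2) * Real.exp (-(β * l j)) ≤ β ^ (-(1:ℝ)/2) * E j := by
            have hu : β * l j ≤ Real.exp (β * l j) := by
              nlinarith [Real.add_one_le_exp (β * l j)]
            have h12 : (β * l j) ^ ((1:ℝ)/2) ≤ (Real.exp (β * l j)) ^ ((1:ℝ)/2) :=
              Real.rpow_le_rpow (mul_nonneg hβ0.le (hl j)) hu (by norm_num)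
            have hexp_half : (Real.exp (β * l j)) ^ ((1:ℝ)/2) = Real.exp (β/2 * l j) := by
              rw [Real.rpow_def_of_pos (Real.exp_pos _), Real.log_exp]
              congr 1; ring
            have hmul : (β * l j) ^ ((1:ℝ)/2) = β ^ ((1:ℝ)/2) * l j ^ ((1:ℝ)/2) :=
              Real.mul_rpow hβ0.le (hl j)
            have hββ : β ^ (-(1:ℝ)/2) * β ^ ((1:ℝ)/2) = 1 := by
              rw [← Real.rpow_add hβ0]
              norm_num
            have hkey : l j ^ ((1:ℝ)/2) ≤ β ^ (-(1:ℝ)/2) * Real.exp (β/2 * l j) := by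
              calc l j ^ ((1:ℝ)/2)
                  = β ^ (-(1:ℝ)/2) * (β ^ ((1:ℝ)/2) * l j ^ ((1:ℝ)/2)) := by
                    rw [← mul_assoc, hββ, one_mul]
                _ = β ^ (-(1:ℝ)/2) * (β * l j) ^ ((1:ℝ)/2) := by rw [hmul]
                _ ≤ β ^ (-(1:ℝ)/2) * Real.exp (β/2 * l j) :=
                    mul_le_mul_of_nonneg_left (hexp_half ▸ h12) hrpow_pos.le
            have hEeq : Real.exp (β/2 * l j) * Real.exp (-(β * l j)) = E j := by
              rw [← Real.exp_add, hE_def]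
              congr 1; ring
            calc l j ^ ((1:ℝ)/2) * Real.exp (-(β * l j))
                ≤ (β ^ (-(1:ℝ)/2) * Real.exp (β/2 * l j)) * Real.exp (-(β * l j)) :=
                  mul_le_mul_of_nonneg_right hkey he0
              _ = β ^ (-(1:ℝ)/2) * E j := by rw [mul_assoc, hEeq]
          calc t j ≤ β/2 * d j ^ 2 * Real.exp (-(β * l j)) := step1
            _ ≤ β/2 * (C ^ 2 * l j ^ ((1:ℝ)/2)) * Real.exp (-(β * l j)) := by
                have h6 : 0 ≤ β/2 * Real.exp (-(β * l j)) := mul_nonneg (by linarith) he0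
                nlinarith [step2]
            _ = (β/2 * C ^ 2) * (l j ^ ((1:ℝ)/2) * Real.exp (-(β * l j))) := by ring
            _ ≤ (β/2 * C ^ 2) * (β ^ (-(1:ℝ)/2) * E j) := by
                exact mul_le_mul_of_nonneg_left step3 (mul_nonneg (by linarith) (sq_nonneg C))
            _ = A * E j := by rw [hA_def]; ring
      simp only [hv_def, if_neg hj0, add_zero]
      exact hAE
  have hnorm_sum : ‖∑' j, t j‖ ≤ ∑' j, v j := tsum_of_norm_bounded hv_sum.hasSum hbound
  have hv_val : ∑' j, v j = A * (∑' j, E j) + d 0 := by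
    rw [hv_def, Summable.tsum_add (hE.1.mul_left A) hv_single, tsum_mul_left, tsum_ite_eq]
  have hEsum : ∑' j, E j ≤ 2 * C' / (β/2) := hE.2
  have hnorm_rhs : ‖β ^ (-(1:ℝ)/2)‖ = β ^ (-(1:ℝ)/2) :=
    Real.norm_of_nonneg hrpow_pos.le
  rw [hnorm_rhs]
  have h1 : 1 ≤ β ^ (-(1:ℝ)/2) :=
    Real.one_le_rpow_of_pos_of_le_one_of_nonpos hβ0 hβ1 (by norm_num)
  have hAval : A * (2 * C' / (β/2)) = 2 * C ^ 2 * C' * β ^ (-(1:ℝ)/2) := by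
    rw [hA_def]
    field_simp
  calc ‖∑' j, t j‖ ≤ ∑' j, v j := hnorm_sum
    _ = A * (∑' j, E j) + d 0 := hv_val
    _ ≤ A * (2 * C' / (β/2)) + d 0 := by
        have := mul_le_mul_of_nonneg_left hEsum hA0
        linarith
    _ = 2 * C ^ 2 * C' * β ^ (-(1:ℝ)/2) + d 0 := by rw [hAval]
    _ ≤ (2 * C ^ 2 * C' + d 0) * β ^ (-(1:ℝ)/2) := by
        have hd0 := hd 0
        nlinarith
end

section
/- Let (λ_j) and (d_j) be sequences of nonnegative reals with λ_j → ∞, and suppose there exist constants C, C' > 0 with d_j ≤ C·λ_j^{1/8} for all j ≥ 1 and #{j : λ_j ≤ x} ≤ C'·x^{3/2} for all x ≥ 1. Then as β → 0+, the sum ∑_j d_j e^{-β λ_j} (1 - (1 - e^{-β d_j})/(β d_j)) is O(β^{-3/4}). -/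
open Filter MeasureTheory Topology Asymptotics

private lemma quad_exp (x : ℝ) (hx : 0 ≤ x) : Real.exp (-x) ≤ 1 - x + x^2/2 := by
  have h := Real.sum_le_exp_of_nonneg hx 3
  simp [Finset.sum_range_succ] at h
  have hQ : 0 ≤ 1 - x + x^2/2 := by nlinarith [sq_nonneg (x-1)]
  have hmul : Real.exp (-x) * Real.exp x = 1 := by
    rw [← Real.exp_add]; simp
  have key : 1 ≤ (1 - x + x^2/2) * Real.exp x := by
    nlinarith [sq_nonneg (x^2), mul_le_mul_of_nonneg_left h hQ]
  nlinarith [Real.exp_pos x, Real.exp_pos (-x)]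

private lemma F_nonneg (x : ℝ) (hx : 0 < x) : 0 ≤ 1 - (1 - Real.exp (-x)) / x := by
  have h := Real.add_one_le_exp (-x)
  rw [sub_nonneg, div_le_one hx]; linarith

private lemma F_le_one (x : ℝ) (hx : 0 < x) : 1 - (1 - Real.exp (-x)) / x ≤ 1 := by
  have h : Real.exp (-x) ≤ 1 := by
    have := Real.exp_le_exp.2 (neg_nonpos.2 hx.le)
    rwa [Real.exp_zero] at this
  have hd : 0 ≤ (1 - Real.exp (-x)) / x := div_nonneg (by linarith) hx.le
  linarith

private lemma F_le_half (x : ℝ) (hx : 0 < x) : 1 - (1 - Real.exp (-x)) / x ≤ x / 2 := by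
  have hq := quad_exp x hx.le
  have hxe : x * ((1 - Real.exp (-x)) / x) = 1 - Real.exp (-x) := by field_simp
  have key : x * (1 - (1 - Real.exp (-x)) / x) ≤ x * (x / 2) := by nlinarith
  exact le_of_mul_le_mul_left key hx

private lemma pow4_exp (x : ℝ) (hx : 0 ≤ x) :
    x ^ ((1:ℝ)/4) * Real.exp (-x/2) ≤ 2 := by
  have h1 : x ^ ((1:ℝ)/4) ≤ 1 + x := by
    rcases le_total x 1 with h | h
    · have := Real.rpow_le_one hx h (by norm_num : (0:ℝ) ≤ 1/4)
      linarith
    · have := Real.rpow_le_rpow_of_exponent_le h (by norm_num : (1:ℝ)/4 ≤ 1)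
      rw [Real.rpow_one] at this; linarith
  have h2 : 1 + x ≤ 2 * Real.exp (x/2) := by
    have := Real.add_one_le_exp (x/2); linarith
  have hmul : Real.exp (x/2) * Real.exp (-x/2) = 1 := by
    rw [← Real.exp_add]; ring_nf; exact Real.exp_zero
  calc x ^ ((1:ℝ)/4) * Real.exp (-x/2)
      ≤ (2 * Real.exp (x/2)) * Real.exp (-x/2) := by
        apply mul_le_mul_of_nonneg_right (h1.trans h2) (Real.exp_nonneg _)
    _ = 2 := by rw [mul_assoc, hmul, mul_one]

private lemma lam_bound (β lam : ℝ) (hβ : 0 < β) (hlam : 0 ≤ lam) :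
    lam ^ ((1:ℝ)/4) * Real.exp (-(β * lam)/2) ≤ 2 * β ^ (-(1:ℝ)/4) := by
  have hkey : lam ^ ((1:ℝ)/4) = (β * lam) ^ ((1:ℝ)/4) * β ^ (-(1:ℝ)/4) := by
    rw [Real.mul_rpow hβ.le hlam, mul_comm (β ^ ((1:ℝ)/4)), mul_assoc,
      ← Real.rpow_add hβ]
    norm_num
  rw [hkey]
  have h := pow4_exp (β * lam) (mul_nonneg hβ.le hlam)
  have hb : (0:ℝ) ≤ β ^ (-(1:ℝ)/4) := Real.rpow_nonneg hβ.le _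
  calc (β * lam) ^ ((1:ℝ)/4) * β ^ (-(1:ℝ)/4) * Real.exp (-(β * lam)/2)
      = ((β * lam) ^ ((1:ℝ)/4) * Real.exp (-(β * lam)/2)) * β ^ (-(1:ℝ)/4) := by ring
    _ ≤ 2 * β ^ (-(1:ℝ)/4) := mul_le_mul_of_nonneg_right h hb

noncomputable def Kc : ℝ := ∑' n : ℕ, ((n:ℝ)+1)^2 * Real.exp (-1) ^ n

private lemma Kc_summable : Summable (fun n : ℕ => ((n:ℝ)+1)^2 * Real.exp (-1) ^ n) := by
  have hr : ‖Real.exp (-1)‖ < 1 := by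
    rw [Real.norm_eq_abs, abs_of_pos (Real.exp_pos _)]
    exact Real.exp_lt_one_iff.mpr (by norm_num)
  have h2 := summable_pow_mul_geometric_of_norm_lt_one 2 hr
  have h1 := summable_pow_mul_geometric_of_norm_lt_one 1 hr
  have h0 := summable_pow_mul_geometric_of_norm_lt_one 0 hr
  exact (h2.add ((h1.mul_left 2).add h0)).congr (fun n => by push_cast; ring)

private lemma Kc_nonneg : 0 ≤ Kc :=
  tsum_nonneg (fun n => mul_nonneg (by positivity) (by positivity))

private lemma expsum (l : ℕ → ℝ) (hl : ∀ j, 0 ≤ l j) (C' : ℝ) (hC' : 0 < C')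
    (hcount : ∀ x : ℝ, 1 ≤ x → ∀ s : Finset ℕ, (∀ j ∈ s, l j ≤ x) →
      (s.card : ℝ) ≤ C' * x ^ ((3 : ℝ) / 2))
    (t : ℝ) (ht : 0 < t) (ht1 : t ≤ 1) (s : Finset ℕ) :
    ∑ j ∈ s, Real.exp (-(t * l j)) ≤ C' * Kc * t ^ (-(3:ℝ)/2) := by
  classical
  set g : ℕ → ℕ := fun j => ⌊t * l j⌋₊ with hg
  have step1 : ∑ j ∈ s, Real.exp (-(t * l j)) ≤ ∑ j ∈ s, Real.exp (-(g j : ℝ)) := by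
    apply Finset.sum_le_sum
    intro j _
    apply Real.exp_le_exp.2
    simp only [neg_le_neg_iff]
    exact Nat.floor_le (mul_nonneg ht.le (hl j))
  have step2 : ∑ j ∈ s, Real.exp (-(g j : ℝ))
      = ∑ n ∈ s.image g, ∑ j ∈ s.filter (fun j => g j = n), Real.exp (-(g j : ℝ)) :=
    (Finset.sum_fiberwise_of_maps_to (fun j hj => Finset.mem_image_of_mem g hj) _).symm
  have step3 : ∀ n ∈ s.image g,
      ∑ j ∈ s.filter (fun j => g j = n), Real.exp (-(g j : ℝ))
        ≤ C' * t ^ (-(3:ℝ)/2) * (((n:ℝ)+1)^2 * Real.exp (-1) ^ n) := by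
    intro n _
    have hcard : (((s.filter (fun j => g j = n)).card : ℝ))
        ≤ C' * (((n:ℝ)+1)/t) ^ ((3:ℝ)/2) := by
      apply hcount
      · rw [le_div_iff₀ ht]
        have : (0:ℝ) ≤ (n:ℝ) := Nat.cast_nonneg n
        linarith
      · intro j hj
        rw [Finset.mem_filter] at hj
        have hfl : t * l j < (n:ℝ) + 1 := by
          have h' : ⌊t * l j⌋₊ = n := hj.2
          have := Nat.lt_floor_add_one (t * l j)
          rw [h'] at this; exact_mod_cast this
        rw [le_div_iff₀ ht]
        linarith [mul_comm t (l j) ▸ hfl]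
    have hsum : ∑ j ∈ s.filter (fun j => g j = n), Real.exp (-(g j : ℝ))
        = ((s.filter (fun j => g j = n)).card : ℝ) * Real.exp (-(n:ℝ)) := by
      rw [Finset.sum_congr rfl (fun j hj => by rw [(Finset.mem_filter.1 hj).2]),
        Finset.sum_const, nsmul_eq_mul]
    have hexp : Real.exp (-(n:ℝ)) = Real.exp (-1) ^ n := by
      rw [← Real.exp_nat_mul]; norm_num
    have hpow : (((n:ℝ)+1)/t) ^ ((3:ℝ)/2) ≤ ((n:ℝ)+1)^2 * t ^ (-(3:ℝ)/2) := by
      rw [Real.div_rpow (by positivity) ht.le]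
      have h1 : ((n:ℝ)+1) ^ ((3:ℝ)/2) ≤ ((n:ℝ)+1)^2 := by
        have hge : (1:ℝ) ≤ (n:ℝ)+1 := by
          have : (0:ℝ) ≤ (n:ℝ) := Nat.cast_nonneg n; linarith
        have := Real.rpow_le_rpow_of_exponent_le hge (by norm_num : (3:ℝ)/2 ≤ 2)
        calc ((n:ℝ)+1) ^ ((3:ℝ)/2) ≤ ((n:ℝ)+1) ^ (2:ℝ) := this
          _ = ((n:ℝ)+1)^2 := by
            rw [show ((2:ℝ)) = ((2:ℕ):ℝ) by norm_num, Real.rpow_natCast]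
      have ht32 : (0:ℝ) < t ^ ((3:ℝ)/2) := Real.rpow_pos_of_pos ht _
      simp only [neg_div]
      rw [Real.rpow_neg ht.le, div_eq_mul_inv]
      exact mul_le_mul_of_nonneg_right h1 (by positivity)
    rw [hsum, hexp]
    have hE : (0:ℝ) ≤ Real.exp (-1) ^ n := by positivity
    calc ((s.filter (fun j => g j = n)).card : ℝ) * Real.exp (-1) ^ n
        ≤ (C' * (((n:ℝ)+1)/t) ^ ((3:ℝ)/2)) * Real.exp (-1) ^ n :=
          mul_le_mul_of_nonneg_right hcard hE
      _ ≤ (C' * (((n:ℝ)+1)^2 * t ^ (-(3:ℝ)/2))) * Real.exp (-1) ^ n := by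
          apply mul_le_mul_of_nonneg_right _ hE
          exact mul_le_mul_of_nonneg_left hpow hC'.le
      _ = C' * t ^ (-(3:ℝ)/2) * (((n:ℝ)+1)^2 * Real.exp (-1) ^ n) := by ring
  have step4 : ∑ n ∈ s.image g, ((n:ℝ)+1)^2 * Real.exp (-1) ^ n ≤ Kc :=
    Summable.sum_le_tsum _ (fun n _ => mul_nonneg (by positivity) (by positivity)) Kc_summable
  calc ∑ j ∈ s, Real.exp (-(t * l j))
      ≤ ∑ j ∈ s, Real.exp (-(g j : ℝ)) := step1
    _ = ∑ n ∈ s.image g, ∑ j ∈ s.filter (fun j => g j = n), Real.exp (-(g j : ℝ)) := step2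
    _ ≤ ∑ n ∈ s.image g, C' * t ^ (-(3:ℝ)/2) * (((n:ℝ)+1)^2 * Real.exp (-1) ^ n) :=
        Finset.sum_le_sum step3
    _ = C' * t ^ (-(3:ℝ)/2) * ∑ n ∈ s.image g, ((n:ℝ)+1)^2 * Real.exp (-1) ^ n := by
        rw [Finset.mul_sum]
    _ ≤ C' * t ^ (-(3:ℝ)/2) * Kc := by
        apply mul_le_mul_of_nonneg_left step4
        positivity
    _ = C' * Kc * t ^ (-(3:ℝ)/2) := by ring

theorem stmt_5 (l d : ℕ → ℝ) (hl : ∀ j, 0 ≤ l j) (hd : ∀ j, 0 ≤ d j)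
    (hlim : Tendsto l atTop atTop)
    (C C' : ℝ) (hC : 0 < C) (hC' : 0 < C')
    (hgap : ∀ j : ℕ, 1 ≤ j → d j ≤ C * l j ^ ((1 : ℝ) / 8))
    (hcount : ∀ x : ℝ, 1 ≤ x → ∀ s : Finset ℕ, (∀ j ∈ s, l j ≤ x) →
      (s.card : ℝ) ≤ C' * x ^ ((3 : ℝ) / 2)) :
    (fun β : ℝ => ∑' j : ℕ, d j * Real.exp (-β * l j) *
        (1 - (1 - Real.exp (-β * d j)) / (β * d j)))
      =O[𝓝[>] 0] fun β : ℝ => β ^ (-(3 : ℝ) / 4) := by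
  rw [Asymptotics.isBigO_iff]
  refine ⟨d 0 + C^2 * (C' * Kc * 2 ^ ((3:ℝ)/2)), ?_⟩
  filter_upwards [Ioc_mem_nhdsGT (by norm_num : (0:ℝ) < 1)] with β hβ
  obtain ⟨hβ0, hβ1⟩ := hβ
  simp only [Real.norm_eq_abs]
  set f : ℕ → ℝ := fun j => d j * Real.exp (-β * l j) *
    (1 - (1 - Real.exp (-β * d j)) / (β * d j)) with hf
  have hfnn : ∀ j, 0 ≤ f j := by
    intro j
    by_cases hdj : d j = 0
    · simp [hf, hdj]
    · have hdj' : 0 < d j := lt_of_le_of_ne (hd j) (Ne.symm hdj)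
      have hx : 0 < β * d j := mul_pos hβ0 hdj'
      have h1 := F_nonneg (β * d j) hx
      have : -β * d j = -(β * d j) := neg_mul β (d j)
      simp only [hf, this]
      exact mul_nonneg (mul_nonneg (hd j) (Real.exp_nonneg _)) h1
  set g : ℕ → ℝ := fun j => (if j = 0 then d 0 else 0)
    + C^2 * β ^ ((3:ℝ)/4) * Real.exp (-(β/2 * l j)) with hgdef
  have hfg : ∀ j, f j ≤ g j := by
    intro j
    by_cases hdj : d j = 0
    · have hf0 : f j = 0 := by simp [hf, hdj]
      rw [hf0]
      have h1 : (0:ℝ) ≤ (if j = 0 then d 0 else 0) := by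
        split
        · exact hd 0
        · exact le_rfl
      have h2 : (0:ℝ) ≤ C^2 * β ^ ((3:ℝ)/4) * Real.exp (-(β/2 * l j)) := by positivity
      have hgj : g j = (if j = 0 then d 0 else 0)
          + C^2 * β ^ ((3:ℝ)/4) * Real.exp (-(β/2 * l j)) := by simp only [hgdef]
      rw [hgj]; linarith
    · have hdj' : 0 < d j := lt_of_le_of_ne (hd j) (Ne.symm hdj)
      have hx : 0 < β * d j := mul_pos hβ0 hdj'
      have hneg : -β * d j = -(β * d j) := neg_mul β (d j)
      rcases Nat.eq_zero_or_pos j with hj0 | hj1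
      · subst hj0
        have hF1 := F_le_one (β * d 0) hx
        have hF0 := F_nonneg (β * d 0) hx
        have hexple : Real.exp (-β * l 0) ≤ 1 := by
          rw [Real.exp_le_one_iff]
          nlinarith [mul_nonneg hβ0.le (hl 0)]
        have hle : f 0 ≤ d 0 := by
          simp only [hf, hneg]
          calc d 0 * Real.exp (-β * l 0) * (1 - (1 - Real.exp (-(β * d 0))) / (β * d 0))
              ≤ d 0 * Real.exp (-β * l 0) * 1 := by
                apply mul_le_mul_of_nonneg_left hF1
                exact mul_nonneg (hd 0) (Real.exp_nonneg _)
            _ = d 0 * Real.exp (-β * l 0) := by ring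
            _ ≤ d 0 * 1 := mul_le_mul_of_nonneg_left hexple (hd 0)
            _ = d 0 := mul_one _
        have hg0 : g 0 = d 0 + C^2 * β ^ ((3:ℝ)/4) * Real.exp (-(β/2 * l 0)) := by
          simp [hgdef]
        rw [hg0]
        have : (0:ℝ) ≤ C^2 * β ^ ((3:ℝ)/4) * Real.exp (-(β/2 * l 0)) := by positivity
        linarith
      · -- j ≥ 1
        have hgapj := hgap j hj1
        have hFh := F_le_half (β * d j) hx
        have hF0 := F_nonneg (β * d j) hx
        have step1 : f j ≤ β/2 * (d j)^2 * Real.exp (-β * l j) := by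
          simp only [hf, hneg]
          calc d j * Real.exp (-β * l j) * (1 - (1 - Real.exp (-(β * d j))) / (β * d j))
              ≤ d j * Real.exp (-β * l j) * (β * d j / 2) := by
                apply mul_le_mul_of_nonneg_left hFh
                exact mul_nonneg (hd j) (Real.exp_nonneg _)
            _ = β/2 * (d j)^2 * Real.exp (-β * l j) := by ring
        have hd2 : (d j)^2 ≤ C^2 * l j ^ ((1:ℝ)/4) := by
          have h := pow_le_pow_left₀ (hd j) hgapj 2
          rw [mul_pow] at h
          have hr : (l j ^ ((1:ℝ)/8))^2 = l j ^ ((1:ℝ)/4) := by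
            rw [← Real.rpow_natCast (l j ^ ((1:ℝ)/8)) 2, ← Real.rpow_mul (hl j)]
            norm_num
          rwa [hr] at h
        have hsplit : Real.exp (-β * l j)
            = Real.exp (-(β/2 * l j)) * Real.exp (-(β/2 * l j)) := by
          rw [← Real.exp_add]; congr 1; ring
        have hlam := lam_bound β (l j) hβ0 (hl j)
        have hlam' : l j ^ ((1:ℝ)/4) * Real.exp (-(β/2 * l j)) ≤ 2 * β ^ (-(1:ℝ)/4) := by
          have : -(β * l j)/2 = -(β/2 * l j) := by ring
          rwa [this] at hlam
        have hrw : β * β ^ (-(1:ℝ)/4) = β ^ ((3:ℝ)/4) := by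
          nth_rewrite 1 [← Real.rpow_one β]
          rw [← Real.rpow_add hβ0]; norm_num
        have step2 : β/2 * (d j)^2 * Real.exp (-β * l j)
            ≤ C^2 * β ^ ((3:ℝ)/4) * Real.exp (-(β/2 * l j)) := by
          rw [hsplit]
          have e1 : (0:ℝ) ≤ Real.exp (-(β/2 * l j)) := Real.exp_nonneg _
          calc β/2 * (d j)^2 * (Real.exp (-(β/2 * l j)) * Real.exp (-(β/2 * l j)))
              ≤ β/2 * (C^2 * l j ^ ((1:ℝ)/4)) * (Real.exp (-(β/2 * l j)) * Real.exp (-(β/2 * l j))) := by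
                apply mul_le_mul_of_nonneg_right _ (by positivity)
                exact mul_le_mul_of_nonneg_left hd2 (by positivity)
            _ = β/2 * C^2 * (l j ^ ((1:ℝ)/4) * Real.exp (-(β/2 * l j))) * Real.exp (-(β/2 * l j)) := by ring
            _ ≤ β/2 * C^2 * (2 * β ^ (-(1:ℝ)/4)) * Real.exp (-(β/2 * l j)) := by
                apply mul_le_mul_of_nonneg_right _ e1
                exact mul_le_mul_of_nonneg_left hlam' (by positivity)
            _ = C^2 * (β * β ^ (-(1:ℝ)/4)) * Real.exp (-(β/2 * l j)) := by ring
            _ = C^2 * β ^ ((3:ℝ)/4) * Real.exp (-(β/2 * l j)) := by rw [hrw]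
        have : f j ≤ C^2 * β ^ ((3:ℝ)/4) * Real.exp (-(β/2 * l j)) := step1.trans step2
        have hj0' : j ≠ 0 := Nat.pos_iff_ne_zero.mp hj1
        have hgj : g j = C^2 * β ^ ((3:ℝ)/4) * Real.exp (-(β/2 * l j)) := by
          simp [hgdef, hj0']
        rw [hgj]
        linarith
  -- sum bound
  have ht2 : (0:ℝ) < β/2 := by linarith
  have ht21 : β/2 ≤ 1 := by linarith
  have hb34 : (1:ℝ) ≤ β ^ (-(3:ℝ)/4) :=
    Real.one_le_rpow_of_pos_of_le_one_of_nonpos hβ0 hβ1 (by norm_num)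
  have hrw2 : β ^ ((3:ℝ)/4) * (β/2) ^ (-(3:ℝ)/2) = 2 ^ ((3:ℝ)/2) * β ^ (-(3:ℝ)/4) := by
    have h2 : (β/2) ^ (-(3:ℝ)/2) = β ^ (-(3:ℝ)/2) * 2 ^ ((3:ℝ)/2) := by
      rw [Real.div_rpow hβ0.le (by norm_num : (0:ℝ) ≤ 2)]
      simp only [neg_div]
      rw [Real.rpow_neg (by norm_num : (0:ℝ) ≤ 2)]
      field_simp
    rw [h2, ← mul_assoc, ← Real.rpow_add hβ0,
      show (3:ℝ)/4 + -(3:ℝ)/2 = -(3:ℝ)/4 by norm_num, mul_comm]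
  have hsumb : ∀ s : Finset ℕ, ∑ j ∈ s, f j
      ≤ (d 0 + C^2 * (C' * Kc * 2 ^ ((3:ℝ)/2))) * β ^ (-(3:ℝ)/4) := by
    intro s
    have h1 : ∑ j ∈ s, f j ≤ ∑ j ∈ s, g j := Finset.sum_le_sum (fun j _ => hfg j)
    have h2 : ∑ j ∈ s, g j = (∑ j ∈ s, if j = 0 then d 0 else 0)
        + C^2 * β ^ ((3:ℝ)/4) * ∑ j ∈ s, Real.exp (-(β/2 * l j)) := by
      rw [hgdef, Finset.sum_add_distrib, Finset.mul_sum]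
    have h3 : (∑ j ∈ s, if j = 0 then d 0 else 0) ≤ d 0 := by
      rw [Finset.sum_ite_eq' s 0 (fun _ => d 0)]
      split
      · exact le_rfl
      · exact hd 0
    have h4 : ∑ j ∈ s, Real.exp (-(β/2 * l j)) ≤ C' * Kc * (β/2) ^ (-(3:ℝ)/2) :=
      expsum l hl C' hC' hcount (β/2) ht2 ht21 s
    have h5 : C^2 * β ^ ((3:ℝ)/4) * ∑ j ∈ s, Real.exp (-(β/2 * l j))
        ≤ C^2 * β ^ ((3:ℝ)/4) * (C' * Kc * (β/2) ^ (-(3:ℝ)/2)) := by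
      apply mul_le_mul_of_nonneg_left h4 (by positivity)
    have h6 : C^2 * β ^ ((3:ℝ)/4) * (C' * Kc * (β/2) ^ (-(3:ℝ)/2))
        = C^2 * (C' * Kc * 2 ^ ((3:ℝ)/2)) * β ^ (-(3:ℝ)/4) := by
      calc C^2 * β ^ ((3:ℝ)/4) * (C' * Kc * (β/2) ^ (-(3:ℝ)/2))
          = C^2 * (C' * Kc) * (β ^ ((3:ℝ)/4) * (β/2) ^ (-(3:ℝ)/2)) := by ring
        _ = C^2 * (C' * Kc) * (2 ^ ((3:ℝ)/2) * β ^ (-(3:ℝ)/4)) := by rw [hrw2]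
        _ = C^2 * (C' * Kc * 2 ^ ((3:ℝ)/2)) * β ^ (-(3:ℝ)/4) := by ring
    have h7 : d 0 ≤ d 0 * β ^ (-(3:ℝ)/4) := by
      nth_rewrite 1 [← mul_one (d 0)]
      exact mul_le_mul_of_nonneg_left hb34 (hd 0)
    calc ∑ j ∈ s, f j ≤ ∑ j ∈ s, g j := h1
      _ = (∑ j ∈ s, if j = 0 then d 0 else 0)
          + C^2 * β ^ ((3:ℝ)/4) * ∑ j ∈ s, Real.exp (-(β/2 * l j)) := h2
      _ ≤ d 0 + C^2 * (C' * Kc * 2 ^ ((3:ℝ)/2)) * β ^ (-(3:ℝ)/4) := by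
          rw [← h6]; exact add_le_add h3 h5
      _ ≤ (d 0 + C^2 * (C' * Kc * 2 ^ ((3:ℝ)/2))) * β ^ (-(3:ℝ)/4) := by
          have hK := Kc_nonneg
          have : d 0 * 1 ≤ d 0 * β ^ (-(3:ℝ)/4) :=
            mul_le_mul_of_nonneg_left hb34 (hd 0)
          nlinarith
  have hsummable : Summable f :=
    summable_of_sum_le (fun j => hfnn j) hsumb
  have htsum : ∑' j, f j ≤ (d 0 + C^2 * (C' * Kc * 2 ^ ((3:ℝ)/2))) * β ^ (-(3:ℝ)/4) :=
    Summable.tsum_le_of_sum_le hsummable hsumb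
  have htnn : 0 ≤ ∑' j, f j := tsum_nonneg hfnn
  rw [abs_of_nonneg htnn, abs_of_nonneg (Real.rpow_nonneg hβ0.le _)]
  exact htsum
end

section
/- For every γ ∈ (0, 1), the integral ∫_{-∞}^{∞} (1 - e^{-γ e^{2t}})/(t^2 + π^2/4) dt is O(1/log(1/γ)) as γ → 0+. -/
open Filter MeasureTheory Topology Asymptotics
open Set Real

lemma exp_two_integrableOn (T : ℝ) :
    IntegrableOn (fun t => Real.exp (2*t)) (Set.Iic T) := by
  refine ((integrableOn_exp_Iic T).const_mul (Real.exp T)).mono'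
    (Continuous.aestronglyMeasurable (by continuity)) ?_
  filter_upwards [ae_restrict_mem measurableSet_Iic] with t ht
  rw [Real.norm_eq_abs, abs_of_pos (Real.exp_pos _), two_mul, Real.exp_add]
  exact mul_le_mul_of_nonneg_right (Real.exp_le_exp.2 ht) (Real.exp_pos _).le

lemma exp_two_integral (T : ℝ) :
    ∫ t in Set.Iic T, Real.exp (2*t) = Real.exp (2*T) / 2 := by
  have h : ∫ t in Set.Iic T, Real.exp (2*t) = Real.exp (2*T)/2 - 0 := by
    refine integral_Iic_of_hasDerivAt_of_tendsto' (f := fun t => Real.exp (2*t)/2)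
      (fun x _ => ?_) (exp_two_integrableOn T) ?_
    · have := ((Real.hasDerivAt_exp (2*x)).comp x ((hasDerivAt_id x).const_mul 2)).div_const 2
      simpa [mul_comm] using this
    · have h1 : Tendsto (fun t : ℝ => 2*t) atBot atBot :=
        tendsto_id.const_mul_atBot two_pos
      have := (Real.tendsto_exp_atBot.comp h1).div_const 2
      simpa using this
  simpa using h

theorem stmt_7 :
    (fun γ : ℝ => ∫ t : ℝ, (1 - Real.exp (-(γ * Real.exp (2 * t)))) / (t ^ 2 + Real.pi ^ 2 / 4))
      =O[𝓝[>] 0] fun γ : ℝ => 1 / Real.log (1 / γ) := by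
  rw [Asymptotics.isBigO_iff]
  refine ⟨5, ?_⟩
  have hmem : Set.Ioo (0:ℝ) 1 ∈ 𝓝[>] (0:ℝ) :=
    Ioo_mem_nhdsGT_of_mem ⟨le_rfl, zero_lt_one⟩
  have hsq : ∀ᶠ γ in 𝓝[>] (0:ℝ), -1 < Real.log γ * γ ^ (1/2 : ℝ) :=
    (tendsto_log_mul_rpow_nhdsGT_zero one_half_pos).eventually_const_lt (by norm_num)
  filter_upwards [hmem, hsq] with γ hγ hγ2
  obtain ⟨hγ0, hγ1⟩ := hγ
  set L := Real.log (1/γ) with hL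
  have hLlog : L = -Real.log γ := by rw [hL, one_div, Real.log_inv]
  have hL0 : 0 < L := by
    rw [hLlog]; simpa using Real.log_neg hγ0 hγ1
  set T := L/4 with hT
  have hT0 : 0 < T := by positivity
  have hπ : (0:ℝ) < Real.pi ^ 2 / 4 := by positivity
  -- √γ ≤ 1/L
  have hsqrt : Real.sqrt γ ≤ 1 / L := by
    have h1 : γ ^ (1/2 : ℝ) = Real.sqrt γ := (Real.sqrt_eq_rpow γ).symm
    rw [h1] at hγ2
    rw [le_div_iff₀ hL0, hLlog]
    nlinarith [Real.sqrt_nonneg γ]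
  -- bounding functions
  set f1 : ℝ → ℝ := fun t => (4*γ/Real.pi^2) * Real.exp (2*t) with hf1
  set f2 : ℝ → ℝ := fun t => t ^ (-2 : ℝ) with hf2
  have hint1 : IntegrableOn f1 (Set.Iic T) := (exp_two_integrableOn T).const_mul _
  have hint2 : IntegrableOn f2 (Set.Ioi T) :=
    integrableOn_Ioi_rpow_of_lt (by norm_num) hT0
  have hind1 : Integrable ((Set.Iic T).indicator f1) :=
    hint1.integrable_indicator measurableSet_Iic
  have hind2 : Integrable ((Set.Ioi T).indicator f2) :=
    hint2.integrable_indicator measurableSet_Ioi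
  set g : ℝ → ℝ := fun t => (1 - Real.exp (-(γ * Real.exp (2 * t)))) / (t ^ 2 + Real.pi ^ 2 / 4)
    with hg
  have hbound : ∀ t, ‖g t‖ ≤ (Set.Iic T).indicator f1 t + (Set.Ioi T).indicator f2 t := by
    intro t
    have hD : 0 < t^2 + Real.pi^2/4 := by positivity
    have hx0 : 0 ≤ γ * Real.exp (2*t) := by positivity
    have hN0 : 0 ≤ 1 - Real.exp (-(γ * Real.exp (2*t))) := by
      have : Real.exp (-(γ * Real.exp (2*t))) ≤ Real.exp 0 :=
        Real.exp_le_exp.2 (by linarith)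
      rw [Real.exp_zero] at this; linarith
    have hg0 : 0 ≤ g t := div_nonneg hN0 hD.le
    rw [Real.norm_eq_abs, abs_of_nonneg hg0]
    rcases le_or_gt t T with ht | ht
    · rw [Set.indicator_of_mem (Set.mem_Iic.2 ht),
        Set.indicator_of_notMem (by simpa using ht.not_gt), add_zero]
      have hNx : 1 - Real.exp (-(γ * Real.exp (2*t))) ≤ γ * Real.exp (2*t) := by
        have := Real.add_one_le_exp (-(γ * Real.exp (2*t))); linarith
      have : g t ≤ (γ * Real.exp (2*t)) / (Real.pi^2/4) :=
        div_le_div₀ hx0 hNx hπ (by nlinarith [sq_nonneg t])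
      calc g t ≤ (γ * Real.exp (2*t)) / (Real.pi^2/4) := this
        _ = f1 t := by rw [hf1]; field_simp
    · rw [Set.indicator_of_notMem (by simpa using ht), Set.indicator_of_mem (Set.mem_Ioi.2 ht),
        zero_add]
      have ht0 : 0 < t := hT0.trans ht
      have h2 : f2 t = 1 / t^2 := by
        show t ^ (-2:ℝ) = 1 / t^2
        rw [show (-2:ℝ) = -((2:ℕ):ℝ) by norm_num, Real.rpow_neg ht0.le, Real.rpow_natCast,
          one_div]
      rw [h2]
      refine div_le_div₀ (by positivity) (by linarith [Real.exp_pos (-(γ * Real.exp (2*t)))])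
        (by positivity) (by nlinarith)
  have hInt : ‖∫ t, g t‖ ≤ ∫ t, ((Set.Iic T).indicator f1 t + (Set.Ioi T).indicator f2 t) := by
    calc ‖∫ t, g t‖ ≤ ∫ t, ‖g t‖ := norm_integral_le_integral_norm g
      _ ≤ _ := integral_mono_of_nonneg (ae_of_all _ fun t => norm_nonneg _)
          (hind1.add hind2) (ae_of_all _ hbound)
  have hval : ∫ t, ((Set.Iic T).indicator f1 t + (Set.Ioi T).indicator f2 t)
      = (4*γ/Real.pi^2) * (Real.exp (2*T)/2) + T⁻¹ := by
    rw [integral_add hind1 hind2, integral_indicator measurableSet_Iic,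
      integral_indicator measurableSet_Ioi]
    rw [hf1, hf2]
    rw [MeasureTheory.integral_const_mul, exp_two_integral,
      integral_Ioi_rpow_of_lt (by norm_num) hT0]
    norm_num [Real.rpow_neg_one]
  -- γ * exp(2T) = √γ
  have hexpL : Real.exp L = 1/γ := by rw [hL]; exact Real.exp_log (by positivity)
  have e1 : Real.exp (2*T) = Real.sqrt (1/γ) := by
    have : (2:ℝ)*T = L/2 := by rw [hT]; ring
    rw [this]
    calc Real.exp (L/2) = Real.sqrt (Real.exp (L/2) ^ 2) :=
          (Real.sqrt_sq (Real.exp_pos _).le).symm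
      _ = Real.sqrt (Real.exp L) := by rw [sq, ← Real.exp_add]; ring_nf
      _ = Real.sqrt (1/γ) := by rw [hexpL]
  have hval2 : γ * Real.exp (2*T) = Real.sqrt γ := by
    rw [e1, one_div, Real.sqrt_inv]
    have hs0 : 0 < Real.sqrt γ := Real.sqrt_pos.2 hγ0
    rw [mul_inv_eq_iff_eq_mul₀ hs0.ne']
    exact (Real.mul_self_sqrt hγ0.le).symm
  -- conclude
  have hnorm : ‖1 / Real.log (1/γ)‖ = 1/L := by
    rw [Real.norm_eq_abs, ← hL, abs_of_pos (by positivity)]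
  rw [hnorm]
  have hπ3 : Real.pi > 3 := Real.pi_gt_three
  have hTinv : T⁻¹ = 4/L := by rw [hT]; field_simp
  calc ‖∫ t, g t‖ ≤ (4*γ/Real.pi^2) * (Real.exp (2*T)/2) + T⁻¹ := hval ▸ hInt
    _ = (2/Real.pi^2) * (γ * Real.exp (2*T)) + 4/L := by rw [hTinv]; ring
    _ = (2/Real.pi^2) * Real.sqrt γ + 4/L := by rw [hval2]
    _ ≤ 5 * (1/L) := by
        have h1 : (2/Real.pi^2) * Real.sqrt γ ≤ 1 * (1/L) := by
          have : (2:ℝ)/Real.pi^2 ≤ 1 := by rw [div_le_one (by positivity)]; nlinarith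
          have h0 : (0:ℝ) ≤ 1/L := by positivity
          calc (2/Real.pi^2) * Real.sqrt γ ≤ 1 * Real.sqrt γ :=
                mul_le_mul_of_nonneg_right this (Real.sqrt_nonneg γ)
            _ ≤ 1 * (1/L) := by simpa using hsqrt
        have h2 : (4:ℝ)/L = 4 * (1/L) := by ring
        linarith
end

section
/- Let σ_0 > 0 and define h(ρ) = -1/(ρ^2 + σ_0^2)^2 for complex ρ. Then there exist constants c > 0 and T_0 > 0 such that for all real T ≥ T_0 and all t ∈ [-σ_0, 0], the real part of h'(T + it) satisfies Re h'(T + it) ≥ c/T^5. -/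
open Complex


private lemma stmt_15_aux (σ₀ T t A B : ℝ) (hσ₀ : 0 < σ₀) (hT1 : 1 ≤ T)
    (hT4 : 4*σ₀ ≤ T) (ht1 : -σ₀ ≤ t) (ht2 : t ≤ 0)
    (hA : A = T^2 - t^2 + σ₀^2) (hB : B = 2*T*t) :
    1/512 / T^5 ≤ (4*T*(A^3 - 3*A*B^2) + 4*t*(3*A^2*B - B^3)) / (A^2+B^2)^3 := by
  have hTpos : (0:ℝ) < T := lt_of_lt_of_le one_pos hT1
  have ht2sq : t^2 ≤ σ₀^2 := by nlinarith
  have hApos : (0:ℝ) < A := by nlinarith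
  have hAT : T^2 ≤ A := by nlinarith
  have hA2 : A ≤ 2*T^2 := by nlinarith
  have hσT : 16*σ₀^2 ≤ T^2 := by nlinarith
  have hA2sq : T^4 ≤ A^2 := by nlinarith
  have hBsq : B^2 = 4*T^2*t^2 := by rw [hB]; ring
  have hB2 : B^2 ≤ A^2/4 := by
    nlinarith [mul_le_mul_of_nonneg_left ht2sq (by positivity : (0:ℝ) ≤ 4*T^2),
      mul_le_mul_of_nonneg_left hσT (by positivity : (0:ℝ) ≤ T^2/4)]
  have htB : 0 ≤ t*B := by nlinarith
  have hA3 : T^6 ≤ A^3 := by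
    calc T^6 = (T^2)^3 := by ring
      _ ≤ A^3 := pow_le_pow_left₀ (sq_nonneg T) hAT 3
  have hN : T^7 ≤ 4*T*(A^3 - 3*A*B^2) + 4*t*(3*A^2*B - B^3) := by
    have h3AB : 0 ≤ 3*A^2 - B^2 := by nlinarith
    have h1 : 12*(T*A)*B^2 ≤ 12*(T*A)*(A^2/4) :=
      mul_le_mul_of_nonneg_left hB2 (by positivity)
    have h2 : 0 ≤ 4*(t*B)*(3*A^2-B^2) :=
      mul_nonneg (mul_nonneg (by norm_num) htB) h3AB
    have h3 : T*T^6 ≤ T*A^3 := mul_le_mul_of_nonneg_left hA3 hTpos.le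
    nlinarith [h1, h2, h3]
  have hD : (A^2+B^2)^3 ≤ 512*T^12 := by
    have hAB : A^2+B^2 ≤ 8*T^4 := by nlinarith
    calc (A^2+B^2)^3 ≤ (8*T^4)^3 := pow_le_pow_left₀ (by positivity) hAB 3
      _ = 512*T^12 := by ring
  have hDpos : (0:ℝ) < (A^2+B^2)^3 := by positivity
  rw [div_le_div_iff₀ (by positivity) hDpos]
  calc 1/512 * (A^2+B^2)^3 ≤ 1/512 * (512*T^12) := by linarith
    _ = T^7 * T^5 := by ring
    _ ≤ (4*T*(A^3 - 3*A*B^2) + 4*t*(3*A^2*B - B^3)) * T^5 :=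
      mul_le_mul_of_nonneg_right hN (by positivity)

theorem stmt_15 (σ₀ : ℝ) (hσ₀ : 0 < σ₀) :
    ∃ c : ℝ, 0 < c ∧ ∃ T₀ : ℝ, 0 < T₀ ∧ ∀ T : ℝ, T₀ ≤ T → ∀ t : ℝ, -σ₀ ≤ t → t ≤ 0 →
      c / T ^ 5 ≤ (deriv (fun ρ : ℂ => -1 / ((ρ ^ 2 + (σ₀ : ℂ) ^ 2) ^ 2))
        ((T : ℂ) + (t : ℂ) * Complex.I)).re := by
  refine ⟨1/512, by norm_num, max 1 (4*σ₀), lt_of_lt_of_le one_pos (le_max_left _ _), ?_⟩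
  intro T hT t ht1 ht2
  have hT1 : (1:ℝ) ≤ T := le_trans (le_max_left _ _) hT
  have hT4 : 4*σ₀ ≤ T := le_trans (le_max_right _ _) hT
  have hTpos : (0:ℝ) < T := lt_of_lt_of_le one_pos hT1
  have ht2sq : t^2 ≤ σ₀^2 := by nlinarith
  set z : ℂ := (T:ℂ) + (t:ℂ)*Complex.I with hz
  set A : ℝ := T^2 - t^2 + σ₀^2 with hA
  set B : ℝ := 2*T*t with hB
  have hApos : (0:ℝ) < A := by nlinarith
  have hAT : T^2 ≤ A := by nlinarith
  have hzsq : z^2 + (σ₀:ℂ)^2 = (A:ℂ) + (B:ℂ)*Complex.I := by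
    apply Complex.ext <;>
      simp [hz, hA, hB, pow_two, Complex.mul_re, Complex.mul_im] <;> ring
  have hne : z^2 + (σ₀:ℂ)^2 ≠ 0 := by
    rw [hzsq]
    intro h
    have : A = 0 := by simpa using congrArg Complex.re h
    linarith
  have hne2 : (z^2 + (σ₀:ℂ)^2)^2 ≠ 0 := pow_ne_zero _ hne
  have hw : HasDerivAt (fun ρ : ℂ => ρ^2 + (σ₀:ℂ)^2) (2*z) z := by
    simpa using ((hasDerivAt_pow 2 z).add_const ((σ₀:ℂ)^2))
  have hg : HasDerivAt (fun ρ : ℂ => (ρ^2+(σ₀:ℂ)^2)^2)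
      ((2:ℕ) * (z^2+(σ₀:ℂ)^2)^(2-1) * (2*z)) z := hw.pow 2
  have hd := (hasDerivAt_const z (-1:ℂ)).div hg hne2
  have hderiv : deriv (fun ρ : ℂ => -1 / ((ρ ^ 2 + (σ₀ : ℂ) ^ 2) ^ 2)) z =
      4*z / ((A:ℂ) + (B:ℂ)*Complex.I)^3 := by
    rw [show (fun ρ : ℂ => -1 / ((ρ ^ 2 + (σ₀ : ℂ) ^ 2) ^ 2)) = ((fun _ => (-1:ℂ)) / fun ρ : ℂ => (ρ ^ 2 + (σ₀ : ℂ) ^ 2) ^ 2) from rfl, hd.deriv, ← hzsq]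
    field_simp
    ring
  rw [hderiv]
  have hre : (4*z / ((A:ℂ) + (B:ℂ)*Complex.I)^3).re =
      (4*T*(A^3 - 3*A*B^2) + 4*t*(3*A^2*B - B^3)) / (A^2+B^2)^3 := by
    have h1 : (((A:ℂ)+(B:ℂ)*Complex.I)^3).re = A^3 - 3*A*B^2 := by
      simp [pow_succ, Complex.mul_re, Complex.mul_im]; ring
    have h2 : (((A:ℂ)+(B:ℂ)*Complex.I)^3).im = 3*A^2*B - B^3 := by
      simp [pow_succ, Complex.mul_re, Complex.mul_im]; ring
    have h3 : Complex.normSq (((A:ℂ)+(B:ℂ)*Complex.I)^3) = (A^2+B^2)^3 := by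
      rw [map_pow, Complex.normSq_add_mul_I]
    rw [Complex.div_re, h1, h2, h3]
    simp [hz, Complex.mul_re, Complex.mul_im]
    ring
  rw [hre]
  exact stmt_15_aux σ₀ T t A B hσ₀ hT1 hT4 ht1 ht2 rfl rfl
end

section
/- For β > 0 and σ > 0, ∫_{-∞}^∞ 2β(σ + |s|) e^{βσ^2 - βs^2} · (1/(1 + (1/2)log(σ^2 + s^2))) ds = O(1/log(1/β)) as β → 0+, for fixed σ > e. -/
set_option maxHeartbeats 1000000


open Filter MeasureTheory Topology Asymptotics

theorem stmt_16 (σ : ℝ) (hσ : Real.exp 1 < σ) :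
    (fun β : ℝ => ∫ s : ℝ, 2 * β * (σ + |s|) * Real.exp (β * σ ^ 2 - β * s ^ 2) *
        (1 / (1 + (1 / 2) * Real.log (σ ^ 2 + s ^ 2))))
      =O[𝓝[>] 0] fun β : ℝ => 1 / Real.log (1 / β) := by
  have hσ1 : 1 < σ := by nlinarith [Real.add_one_le_exp 1]
  have hσ0 : 0 < σ := by linarith
  rw [Asymptotics.isBigO_iff]
  refine ⟨32 * (σ + 1) * Real.exp (σ ^ 2), ?_⟩
  filter_upwards [Ioo_mem_nhdsGT_of_mem (Set.left_mem_Ico.2 one_pos)] with β hβ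
  obtain ⟨hβ0, hβ1⟩ := hβ
  set L := Real.log (1 / β) with hLdef
  have hL0 : 0 < L := Real.log_pos (by rw [lt_div_iff₀ hβ0]; linarith)
  set t := Real.sqrt β with htdef
  have ht0 : 0 < t := Real.sqrt_pos.2 hβ0
  have ht2 : t ^ 2 = β := Real.sq_sqrt hβ0.le
  have ht1 : t ≤ 1 := by
    rw [htdef, show (1:ℝ) = Real.sqrt 1 by simp]
    exact Real.sqrt_le_sqrt hβ1.le
  -- t * L ≤ 2
  have hLt : t * L ≤ 2 := by
    have h1 : L = 2 * Real.log t⁻¹ := by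
      rw [hLdef, show 1 / β = (t⁻¹) ^ 2 by rw [inv_pow, ht2, one_div], Real.log_pow]
      push_cast; ring
    have h2 : Real.log t⁻¹ ≤ t⁻¹ := by
      have := Real.log_le_sub_one_of_pos (inv_pos.2 ht0)
      linarith
    calc t * L = t * (2 * Real.log t⁻¹) := by rw [h1]
    _ ≤ t * (2 * t⁻¹) := by
        apply mul_le_mul_of_nonneg_left _ ht0.le
        linarith
    _ = 2 := by field_simp
  set R := (1 / β) ^ ((4:ℝ)⁻¹) with hRdef
  have hβinv1 : 1 ≤ 1 / β := by rw [le_div_iff₀ hβ0]; linarith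
  have hR0 : 0 < R := Real.rpow_pos_of_pos (by positivity) _
  have hlogR : Real.log R = L / 4 := by
    rw [hRdef, Real.log_rpow (by positivity)]; ring
  have hR2 : R ^ 2 = t⁻¹ := by
    have h1 : R ^ 2 = (1/β) ^ ((2:ℝ)⁻¹) := by
      rw [hRdef, ← Real.rpow_natCast ((1/β) ^ ((4:ℝ)⁻¹)) 2,
        ← Real.rpow_mul (by positivity)]
      norm_num
    rw [h1, show ((2:ℝ)⁻¹) = (1/2 : ℝ) by norm_num, ← Real.sqrt_eq_rpow, one_div,
      Real.sqrt_inv, htdef]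
  have hβR : β * R ≤ t := by
    have h1 : R ≤ (1/β) ^ ((2:ℝ)⁻¹) := Real.rpow_le_rpow_of_exponent_le hβinv1 (by norm_num)
    have h2 : (1/β) ^ ((2:ℝ)⁻¹) = t⁻¹ := by
      rw [show ((2:ℝ)⁻¹) = (1/2 : ℝ) by norm_num, ← Real.sqrt_eq_rpow, one_div,
        Real.sqrt_inv, htdef]
    have h3 : β * R ≤ β * t⁻¹ := by
      apply mul_le_mul_of_nonneg_left _ hβ0.le
      rw [← h2]; exact h1
    calc β * R ≤ β * t⁻¹ := h3
    _ = t := by rw [← ht2]; field_simp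
  have hβR2 : β * R ^ 2 = t := by
    rw [hR2, ← ht2]; field_simp
  -- the sup bound |s| * exp(-(β/2) s^2) ≤ t⁻¹
  have hsup : ∀ s : ℝ, |s| * Real.exp (-(β/2) * s ^ 2) ≤ t⁻¹ := by
    intro s
    have hkey : t * |s| ≤ Real.exp ((β/2) * s ^ 2) := by
      have h1 := Real.add_one_le_exp ((β/2) * s ^ 2)
      have h2 : (t * |s|) ^ 2 = β * s ^ 2 := by
        rw [mul_pow, ht2, sq_abs]
      nlinarith [sq_nonneg (1 - t * |s|)]
    rw [show (-(β/2) * s ^ 2) = -((β/2) * s ^ 2) by ring, Real.exp_neg,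
      ← div_eq_mul_inv, div_le_iff₀ (Real.exp_pos _), inv_mul_eq_div, le_div_iff₀ ht0]
    calc |s| * t = t * |s| := by ring
    _ ≤ Real.exp ((β/2) * s ^ 2) := hkey
  set c1 := 8 / L * β * (σ + t⁻¹) * Real.exp (β * σ ^ 2) with hc1def
  set c2 := 2 * β * (σ + R) * Real.exp (β * σ ^ 2) with hc2def
  have hc1 : 0 ≤ c1 := by positivity
  have hc2 : 0 ≤ c2 := by positivity
  set g : ℝ → ℝ := fun s => c1 * Real.exp (-(β/2) * s ^ 2) +
    Set.indicator (Set.Icc (-R) R) (fun _ => c2) s with hgdef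
  set f : ℝ → ℝ := fun s => 2 * β * (σ + |s|) * Real.exp (β * σ ^ 2 - β * s ^ 2) *
    (1 / (1 + (1 / 2) * Real.log (σ ^ 2 + s ^ 2))) with hfdef
  have hD1 : ∀ s : ℝ, 1 ≤ 1 + (1 / 2) * Real.log (σ ^ 2 + s ^ 2) := by
    intro s
    have : (0:ℝ) ≤ Real.log (σ ^ 2 + s ^ 2) :=
      Real.log_nonneg (by nlinarith [sq_nonneg s])
    linarith
  have hf_nonneg : ∀ s : ℝ, 0 ≤ f s := by
    intro s
    have h1 := hD1 s
    have : (0:ℝ) < 1 + (1 / 2) * Real.log (σ ^ 2 + s ^ 2) := by linarith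
    positivity
  have hind_nonneg : ∀ s : ℝ, 0 ≤ Set.indicator (Set.Icc (-R) R) (fun _ => c2) s := by
    intro s
    exact Set.indicator_nonneg (fun _ _ => hc2) s
  -- pointwise bound
  have hfg : ∀ s : ℝ, f s ≤ g s := by
    intro s
    rcases le_or_gt |s| R with hs | hs
    · -- small s : use indicator term
      have hmem : s ∈ Set.Icc (-R) R := abs_le.1 hs
      have hfc2 : f s ≤ c2 := by
        have hDpos : (0:ℝ) < 1 + (1 / 2) * Real.log (σ ^ 2 + s ^ 2) := lt_of_lt_of_le one_pos (hD1 s)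
        calc f s ≤ 2 * β * (σ + |s|) * Real.exp (β * σ ^ 2 - β * s ^ 2) * 1 := by
              apply mul_le_mul_of_nonneg_left _ (by positivity)
              rw [div_le_one hDpos]
              exact hD1 s
        _ = 2 * β * (σ + |s|) * Real.exp (β * σ ^ 2 - β * s ^ 2) := by ring
        _ ≤ 2 * β * (σ + R) * Real.exp (β * σ ^ 2) := by
              gcongr
              · nlinarith [sq_nonneg s]
        _ = c2 := rfl
      have : g s = c1 * Real.exp (-(β/2) * s ^ 2) + c2 := by
        rw [hgdef]; simp [Set.indicator_of_mem hmem]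
      rw [this]
      have : (0:ℝ) ≤ c1 * Real.exp (-(β/2) * s ^ 2) := by positivity
      linarith
    · -- large s : use gaussian term
      set E := Real.exp (-(β/2) * s ^ 2) with hEdef
      have hE0 : 0 < E := Real.exp_pos _
      have hE1 : E ≤ 1 := by
        rw [hEdef, show (1:ℝ) = Real.exp 0 from (Real.exp_zero).symm]
        apply Real.exp_le_exp.2
        nlinarith [sq_nonneg s]
      have hDge : L / 4 ≤ 1 + (1 / 2) * Real.log (σ ^ 2 + s ^ 2) := by
        have h0s : 0 < |s| := lt_trans hR0 hs
        have h1 : Real.log R ≤ Real.log |s| := Real.log_le_log hR0 hs.le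
        have h2 : Real.log (s ^ 2) = 2 * Real.log |s| := by
          rw [← sq_abs, Real.log_pow]; push_cast; ring
        have hs2 : (0:ℝ) < s ^ 2 := by nlinarith [sq_abs s]
        have h3 : Real.log (s ^ 2) ≤ Real.log (σ ^ 2 + s ^ 2) :=
          Real.log_le_log hs2 (by nlinarith)
        rw [hlogR] at h1
        linarith
      have hDb : 1 / (1 + (1 / 2) * Real.log (σ ^ 2 + s ^ 2)) ≤ 4 / L := by
        have h4 : (0:ℝ) < L / 4 := by linarith
        calc 1 / (1 + (1 / 2) * Real.log (σ ^ 2 + s ^ 2)) ≤ 1 / (L / 4) :=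
              one_div_le_one_div_of_le h4 hDge
        _ = 4 / L := one_div_div L 4
      have hkey : (σ + |s|) * E ≤ σ + t⁻¹ := by
        have h1 := hsup s
        nlinarith [abs_nonneg s]
      have hexp : Real.exp (β * σ ^ 2 - β * s ^ 2) = Real.exp (β * σ ^ 2) * (E * E) := by
        rw [hEdef, ← Real.exp_add, ← Real.exp_add]; ring_nf
      have hfc1 : f s ≤ c1 * E := by
        have hDpos : (0:ℝ) < 1 + (1 / 2) * Real.log (σ ^ 2 + s ^ 2) := lt_of_lt_of_le one_pos (hD1 s)
        have ha : (0:ℝ) ≤ 2 * β * Real.exp (β * σ ^ 2) * E := by positivity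
        calc f s = (2 * β * Real.exp (β * σ ^ 2) * E) * ((σ + |s|) * E) *
              (1 / (1 + (1 / 2) * Real.log (σ ^ 2 + s ^ 2))) := by
              rw [hfdef]; simp only; rw [hexp]; ring
        _ ≤ (2 * β * Real.exp (β * σ ^ 2) * E) * (σ + t⁻¹) *
              (1 / (1 + (1 / 2) * Real.log (σ ^ 2 + s ^ 2))) := by
              apply mul_le_mul_of_nonneg_right _ (by positivity)
              exact mul_le_mul_of_nonneg_left hkey ha
        _ ≤ (2 * β * Real.exp (β * σ ^ 2) * E) * (σ + t⁻¹) * (4 / L) := by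
              apply mul_le_mul_of_nonneg_left hDb
              positivity
        _ = c1 * E := by rw [hc1def]; ring
      have : (0:ℝ) ≤ Set.indicator (Set.Icc (-R) R) (fun _ => c2) s := hind_nonneg s
      rw [hgdef]
      simp only
      linarith
  -- integrability of g
  have hb2 : (0:ℝ) < β / 2 := by linarith
  have hint1 : Integrable (fun s : ℝ => c1 * Real.exp (-(β/2) * s ^ 2)) :=
    (integrable_exp_neg_mul_sq hb2).const_mul c1
  have hint2 : Integrable (Set.indicator (Set.Icc (-R) R) (fun _ : ℝ => c2)) := by
    rw [integrable_indicator_iff measurableSet_Icc]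
    exact integrableOn_const measure_Icc_lt_top.ne
  have hgint : Integrable g := hint1.add hint2
  -- value of ∫ g
  have hg_val : ∫ s : ℝ, g s = c1 * Real.sqrt (Real.pi / (β/2)) + c2 * (2 * R) := by
    rw [hgdef]
    rw [integral_add hint1 hint2, integral_const_mul, integral_gaussian,
      integral_indicator_const _ measurableSet_Icc]
    rw [measureReal_def, Real.volume_Icc]
    rw [ENNReal.toReal_ofReal (by linarith)]
    rw [smul_eq_mul]
    ring
  -- bound ∫ g
  have hgauss : Real.sqrt (Real.pi / (β/2)) ≤ 3 * t⁻¹ := by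
    have h1 : Real.pi / (β/2) = (2 * Real.pi) / β := by ring
    have h2 : Real.sqrt ((2 * Real.pi) / β) = Real.sqrt (2 * Real.pi) / t := by
      rw [Real.sqrt_div (by positivity), htdef]
    have h3 : Real.sqrt (2 * Real.pi) ≤ 3 := by
      rw [show (3:ℝ) = Real.sqrt 9 by
        rw [show (9:ℝ) = 3 ^ 2 by norm_num, Real.sqrt_sq]; norm_num]
      exact Real.sqrt_le_sqrt (by nlinarith [Real.pi_le_four])
    calc Real.sqrt (Real.pi / (β/2)) = Real.sqrt (2 * Real.pi) / t := by rw [h1, h2]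
    _ ≤ 3 / t := by gcongr
    _ = 3 * t⁻¹ := by ring
  have hEβ : Real.exp (β * σ ^ 2) ≤ Real.exp (σ ^ 2) :=
    Real.exp_le_exp.2 (by nlinarith)
  have ht2L : t ≤ 2 / L := (le_div_iff₀ hL0).2 hLt
  have hA : c1 * Real.sqrt (Real.pi / (β/2)) ≤ 24 / L * (σ + 1) * Real.exp (σ ^ 2) := by
    calc c1 * Real.sqrt (Real.pi / (β/2)) ≤ c1 * (3 * t⁻¹) :=
          mul_le_mul_of_nonneg_left hgauss hc1
    _ = 24 / L * (t * σ + 1) * Real.exp (β * σ ^ 2) := by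
          rw [hc1def, ← ht2]; field_simp; ring
    _ ≤ 24 / L * (σ + 1) * Real.exp (σ ^ 2) := by
          gcongr
          nlinarith
  have hB : c2 * (2 * R) ≤ 8 / L * (σ + 1) * Real.exp (σ ^ 2) := by
    have hstep : c2 * (2 * R) = (4 * (σ * (β * R)) + 4 * (β * R ^ 2)) * Real.exp (β * σ ^ 2) := by
      rw [hc2def]; ring
    rw [hstep, hβR2]
    calc (4 * (σ * (β * R)) + 4 * t) * Real.exp (β * σ ^ 2)
        ≤ (4 * (σ * t) + 4 * t) * Real.exp (σ ^ 2) := by gcongr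
    _ = 4 * t * (σ + 1) * Real.exp (σ ^ 2) := by ring
    _ ≤ 4 * (2 / L) * (σ + 1) * Real.exp (σ ^ 2) := by gcongr
    _ = 8 / L * (σ + 1) * Real.exp (σ ^ 2) := by ring
  have hg_le : ∫ s : ℝ, g s ≤ 32 * (σ + 1) * Real.exp (σ ^ 2) * (1 / L) := by
    rw [hg_val]
    calc c1 * Real.sqrt (Real.pi / (β/2)) + c2 * (2 * R)
        ≤ 24 / L * (σ + 1) * Real.exp (σ ^ 2) + 8 / L * (σ + 1) * Real.exp (σ ^ 2) :=
          add_le_add hA hB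
    _ = 32 * (σ + 1) * Real.exp (σ ^ 2) * (1 / L) := by ring
  have hle : ∫ s : ℝ, f s ≤ ∫ s : ℝ, g s :=
    integral_mono_of_nonneg (Filter.Eventually.of_forall hf_nonneg) hgint
      (Filter.Eventually.of_forall hfg)
  have h0 : (0:ℝ) ≤ ∫ s : ℝ, f s := integral_nonneg hf_nonneg
  rw [Real.norm_eq_abs, Real.norm_eq_abs, abs_of_nonneg h0,
    abs_of_nonneg (by positivity : (0:ℝ) ≤ 1 / L)]
  linarith
end

section
/- Let γ ∈ (0,1), ξ > 1, and ε ∈ (0, 1/2). Then ∫_0^∞ (w e^{-w^2}) / log(ξ^2 + w^2/γ) dw ≤ C·(γ^{2ε}/log(ξ^2) + 1/((1-2ε)·log(1/γ))) for an absolute constant C, provided γ is small enough. -/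
open MeasureTheory

lemma aux_hasDeriv (x : ℝ) :
    HasDerivAt (fun x : ℝ => -Real.exp (-x ^ 2) / 2) (x * Real.exp (-x ^ 2)) x := by
  have h1 : HasDerivAt (fun x : ℝ => -x ^ 2) (-(2 * x)) x := by
    simpa using (hasDerivAt_pow 2 x).fun_neg
  have h2 := (Real.hasDerivAt_exp (-x ^ 2)).comp x h1
  have h3 := (h2.fun_neg.div_const 2)
  exact h3.congr_deriv (by ring)

lemma aux_tendsto :
    Filter.Tendsto (fun x : ℝ => -Real.exp (-x ^ 2) / 2) Filter.atTop (nhds 0) := by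
  have h1 : Filter.Tendsto (fun x : ℝ => -x ^ 2) Filter.atTop Filter.atBot := by
    simpa using (Filter.tendsto_pow_atTop (n := 2) (by norm_num)).neg_atBot
  have h2 := Real.tendsto_exp_atBot.comp h1
  have := (h2.neg.div_const 2)
  simpa using this

lemma aux_integrable :
    IntegrableOn (fun w : ℝ => w * Real.exp (-w ^ 2)) (Set.Ioi 0) := by
  refine integrableOn_Ioi_deriv_of_nonneg ?_ (fun x _ => aux_hasDeriv x)
    (fun x hx => mul_nonneg (le_of_lt (Set.mem_Ioi.mp hx)) (Real.exp_pos _).le) aux_tendsto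
  exact (aux_hasDeriv 0).continuousAt.continuousWithinAt

lemma aux_integral :
    ∫ w in Set.Ioi (0 : ℝ), w * Real.exp (-w ^ 2) = 1 / 2 := by
  have := integral_Ioi_of_hasDerivAt_of_tendsto
    (f := fun x : ℝ => -Real.exp (-x ^ 2) / 2)
    (f' := fun x : ℝ => x * Real.exp (-x ^ 2)) (a := 0)
    (aux_hasDeriv 0).continuousAt.continuousWithinAt
    (fun x _ => aux_hasDeriv x) aux_integrable aux_tendsto
  simp at this
  rw [this]
  norm_num

theorem stmt_17 :
    ∃ C : ℝ, 0 < C ∧ ∀ ξ : ℝ, 1 < ξ → ∀ ε : ℝ, 0 < ε → ε < 1 / 2 →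
      ∃ γ₀ : ℝ, 0 < γ₀ ∧ ∀ γ : ℝ, 0 < γ → γ < γ₀ → γ < 1 →
        ∫ w in Set.Ioi (0 : ℝ), w * Real.exp (-w ^ 2) / Real.log (ξ ^ 2 + w ^ 2 / γ)
          ≤ C * (γ ^ (2 * ε) / Real.log (ξ ^ 2) + 1 / ((1 - 2 * ε) * Real.log (1 / γ))) := by
  refine ⟨1, one_pos, fun ξ hξ ε hε hε2 => ⟨1, one_pos, fun γ hγ _ hγ1 => ?_⟩⟩
  set a : ℝ := γ ^ ε with ha
  have ha_pos : 0 < a := Real.rpow_pos_of_pos hγ ε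
  have hξ2 : (1 : ℝ) < ξ ^ 2 := by nlinarith
  have hlogξ : 0 < Real.log (ξ ^ 2) := Real.log_pos hξ2
  have hlogγ : 0 < Real.log (1 / γ) := Real.log_pos (by rw [lt_div_iff₀ hγ]; linarith)
  have hden : 0 < (1 - 2 * ε) * Real.log (1 / γ) := by
    apply mul_pos (by linarith) hlogγ
  -- the dominating function
  set g : ℝ → ℝ := fun w =>
    Set.indicator (Set.Ioc 0 a) (fun w => w / Real.log (ξ ^ 2)) w
      + w * Real.exp (-w ^ 2) / ((1 - 2 * ε) * Real.log (1 / γ)) with hg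
  have hint1 : IntegrableOn (fun w : ℝ =>
      Set.indicator (Set.Ioc 0 a) (fun w => w / Real.log (ξ ^ 2)) w) (Set.Ioi 0) := by
    apply (IntegrableOn.integrable_indicator ?_ measurableSet_Ioc).integrableOn
    exact (continuous_id.div_const _).integrableOn_Ioc
  have hint2 : IntegrableOn (fun w : ℝ =>
      w * Real.exp (-w ^ 2) / ((1 - 2 * ε) * Real.log (1 / γ))) (Set.Ioi 0) :=
    aux_integrable.div_const _
  have hgint : IntegrableOn g (Set.Ioi 0) := hint1.add hint2
  -- pointwise bound
  have hbound : ∀ w ∈ Set.Ioi (0 : ℝ),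
      w * Real.exp (-w ^ 2) / Real.log (ξ ^ 2 + w ^ 2 / γ) ≤ g w := by
    intro w hw
    simp only [Set.mem_Ioi] at hw
    have hnum : 0 ≤ w * Real.exp (-w ^ 2) := by positivity
    have hL : Real.log (ξ ^ 2) ≤ Real.log (ξ ^ 2 + w ^ 2 / γ) := by
      apply Real.log_le_log (by positivity)
      nlinarith [sq_nonneg w, div_nonneg (sq_nonneg w) hγ.le]
    rcases le_or_gt w a with hwa | hwa
    · have h1 : w * Real.exp (-w ^ 2) / Real.log (ξ ^ 2 + w ^ 2 / γ)
          ≤ w / Real.log (ξ ^ 2) := by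
        calc w * Real.exp (-w ^ 2) / Real.log (ξ ^ 2 + w ^ 2 / γ)
            ≤ w * Real.exp (-w ^ 2) / Real.log (ξ ^ 2) := by gcongr
          _ ≤ w * 1 / Real.log (ξ ^ 2) := by
              gcongr
              exact Real.exp_le_one_iff.2 (by nlinarith [sq_nonneg w])
          _ = w / Real.log (ξ ^ 2) := by ring
      have h2 : Set.indicator (Set.Ioc 0 a) (fun w => w / Real.log (ξ ^ 2)) w
          = w / Real.log (ξ ^ 2) := Set.indicator_of_mem (Set.mem_Ioc.mpr ⟨hw, hwa⟩) (fun w => w / Real.log (ξ ^ 2))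
      rw [hg]
      simp only [h2]
      have : 0 ≤ w * Real.exp (-w ^ 2) / ((1 - 2 * ε) * Real.log (1 / γ)) := by positivity
      linarith
    · have hL2 : (1 - 2 * ε) * Real.log (1 / γ) ≤ Real.log (ξ ^ 2 + w ^ 2 / γ) := by
        have hrw : γ ^ (2 * ε - 1) ≤ ξ ^ 2 + w ^ 2 / γ := by
          have h1 : γ ^ (2 * ε - 1) = a ^ 2 / γ := by
            rw [ha, ← Real.rpow_natCast (γ ^ ε) 2, ← Real.rpow_mul hγ.le]
            rw [Real.rpow_sub hγ, Real.rpow_one]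
            push_cast
            rw [mul_comm ε 2]
          have h2 : a ^ 2 / γ ≤ w ^ 2 / γ := by
            gcongr
          nlinarith [sq_nonneg ξ]
        calc (1 - 2 * ε) * Real.log (1 / γ) = (2 * ε - 1) * Real.log γ := by
              rw [one_div, Real.log_inv]; ring
          _ = Real.log (γ ^ (2 * ε - 1)) := (Real.log_rpow hγ _).symm
          _ ≤ Real.log (ξ ^ 2 + w ^ 2 / γ) :=
              Real.log_le_log (Real.rpow_pos_of_pos hγ _) hrw
      have h1 : w * Real.exp (-w ^ 2) / Real.log (ξ ^ 2 + w ^ 2 / γ)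
          ≤ w * Real.exp (-w ^ 2) / ((1 - 2 * ε) * Real.log (1 / γ)) := by gcongr
      have h2 : Set.indicator (Set.Ioc 0 a) (fun w => w / Real.log (ξ ^ 2)) w = 0 :=
        Set.indicator_of_notMem (fun h => absurd h.2 (not_le.2 hwa)) (fun w => w / Real.log (ξ ^ 2))
      rw [hg]
      simp only [h2]
      linarith
  have hmono : ∫ w in Set.Ioi (0 : ℝ),
      w * Real.exp (-w ^ 2) / Real.log (ξ ^ 2 + w ^ 2 / γ) ≤ ∫ w in Set.Ioi (0 : ℝ), g w := by
    apply integral_mono_of_nonneg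
    · refine (ae_restrict_iff' measurableSet_Ioi).2 (Filter.Eventually.of_forall fun w hw => ?_)
      simp only [Set.mem_Ioi] at hw
      have : 0 < Real.log (ξ ^ 2 + w ^ 2 / γ) := by
        apply Real.log_pos
        nlinarith [div_nonneg (sq_nonneg w) hγ.le]
      positivity
    · exact hgint
    · exact (ae_restrict_iff' measurableSet_Ioi).2 (Filter.Eventually.of_forall hbound)
  -- compute ∫ g
  have hI1 : ∫ w in Set.Ioi (0 : ℝ),
      Set.indicator (Set.Ioc 0 a) (fun w => w / Real.log (ξ ^ 2)) w
        = γ ^ (2 * ε) / (2 * Real.log (ξ ^ 2)) := by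
    rw [integral_indicator measurableSet_Ioc, Measure.restrict_restrict measurableSet_Ioc,
      Set.Ioc_inter_Ioi, sup_eq_left.2 le_rfl]
    rw [← intervalIntegral.integral_of_le ha_pos.le]
    rw [intervalIntegral.integral_div, integral_id]
    rw [ha, ← Real.rpow_natCast (γ ^ ε) 2, ← Real.rpow_mul hγ.le]
    push_cast
    rw [mul_comm ε 2]
    ring
  have hI2 : ∫ w in Set.Ioi (0 : ℝ),
      w * Real.exp (-w ^ 2) / ((1 - 2 * ε) * Real.log (1 / γ))
        = (1 / 2) / ((1 - 2 * ε) * Real.log (1 / γ)) := by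
    rw [integral_div, aux_integral]
  have hgval : ∫ w in Set.Ioi (0 : ℝ), g w
      = γ ^ (2 * ε) / (2 * Real.log (ξ ^ 2)) + (1 / 2) / ((1 - 2 * ε) * Real.log (1 / γ)) := by
    rw [hg, integral_add hint1 hint2, hI1, hI2]
  have hrpow : 0 < γ ^ (2 * ε) := Real.rpow_pos_of_pos hγ _
  have hfinal : γ ^ (2 * ε) / (2 * Real.log (ξ ^ 2)) + (1 / 2) / ((1 - 2 * ε) * Real.log (1 / γ))
      ≤ 1 * (γ ^ (2 * ε) / Real.log (ξ ^ 2) + 1 / ((1 - 2 * ε) * Real.log (1 / γ))) := by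
    rw [one_mul]
    have h1 : γ ^ (2 * ε) / (2 * Real.log (ξ ^ 2)) ≤ γ ^ (2 * ε) / Real.log (ξ ^ 2) := by
      gcongr
      linarith
    have h2 : (1 / 2) / ((1 - 2 * ε) * Real.log (1 / γ))
        ≤ 1 / ((1 - 2 * ε) * Real.log (1 / γ)) := by
      gcongr
      norm_num
    linarith
  calc ∫ w in Set.Ioi (0 : ℝ), w * Real.exp (-w ^ 2) / Real.log (ξ ^ 2 + w ^ 2 / γ)
      ≤ ∫ w in Set.Ioi (0 : ℝ), g w := hmono
    _ = _ := hgval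
    _ ≤ _ := hfinal
end
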